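/- arXiv:2303.16729 — 6 statements merged into one kernel-verified Lean document; each statement's English description precedes it below -/
import Mathlib

section
/- Let k ≥ 3 and m ≥ 0 be integers, let S_k be a k×(2^k−1) matrix over F_2 whose columns are exactly the 2^k−1 distinct nonzero vectors of F_2^k, let G be a k×n matrix over F_2 of rank k whose row space C has minimum distance d ≥ 1, and let G' = [S_k | ⋯ | S_k | G] be the k×(m(2^k−1)+n) matrix obtained by juxtaposing m copies of S_k with G, with row space C'. Then C' is a binary [m(2^k−1)+n, k] code with minimum distance exactly m·2^{k−1}+d, and C is a self-orthogonal Griesmer [n,k,d] code if and only if C' is a self-orthogonal Griesmer [m(2^k−1)+n, k, m·2^{k−1}+d] code. -/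
open Finset

/-- Hamming weight of a binary vector. -/
def wt {ι : Type*} [Fintype ι] (x : ι → ZMod 2) : ℕ :=
  (Finset.univ.filter fun i => x i ≠ 0).card

/-- A binary linear code is self-orthogonal if any two codewords are orthogonal. -/
def SelfOrthogonal {ι : Type*} [Fintype ι] (C : Submodule (ZMod 2) (ι → ZMod 2)) : Prop :=
  ∀ x ∈ C, ∀ y ∈ C, ∑ i, x i * y i = 0

/-- `C` has minimum distance exactly `d`: some nonzero codeword has weight `d`,
and every nonzero codeword has weight at least `d`. -/
def HasMinDist {ι : Type*} [Fintype ι] (C : Submodule (ZMod 2) (ι → ZMod 2)) (d : ℕ) : Prop :=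
  (∃ x ∈ C, x ≠ 0 ∧ wt x = d) ∧ ∀ x ∈ C, x ≠ 0 → d ≤ wt x

/-- The Griesmer function `g(k,d) = ∑_{i=0}^{k-1} ⌈d/2^i⌉` (ceiling division). -/
def griesmerBound (k d : ℕ) : ℕ :=
  ∑ i ∈ Finset.range k, (d + 2 ^ i - 1) / 2 ^ i

lemma zmod2_add_self (x : ZMod 2) : x + x = 0 := by revert x; decide
lemma zmod2_add_one_ne (x : ZMod 2) : x + 1 ≠ x := by revert x; decide
lemma zmod2_add_one_one (x : ZMod 2) : x + 1 + 1 = x := by revert x; decide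
lemma zmod2_ne_zero {x : ZMod 2} (h : x ≠ 0) : x = 1 := by revert x; decide

lemma exists_third {k : ℕ} (hk : 3 ≤ k) (i l : Fin k) : ∃ t : Fin k, t ≠ i ∧ t ≠ l := by
  have h2 : ({i, l} : Finset (Fin k)).card ≤ 2 := Finset.card_insert_le _ _ |>.trans (by simp)
  have hc : (({i, l}ᶜ : Finset (Fin k))).Nonempty := by
    rw [← Finset.card_pos, Finset.card_compl]
    simp only [Fintype.card_fin]
    omega
  obtain ⟨t, ht⟩ := hc
  simp only [Finset.mem_compl, Finset.mem_insert, Finset.mem_singleton, not_or] at ht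
  exact ⟨t, ht⟩

/-- key parity fact: for k ≥ 3, sum over all vectors of v i * v l is 0 in ZMod 2. -/
lemma sum_coord_mul (k : ℕ) (hk : 3 ≤ k) (i l : Fin k) :
    ∑ v : Fin k → ZMod 2, v i * v l = 0 := by
  obtain ⟨t, hti, htl⟩ := exists_third hk i l
  refine Finset.sum_involution (fun v _ => Function.update v t (v t + 1)) ?_ ?_ ?_ ?_
  · intro v _
    rw [Function.update_of_ne hti.symm, Function.update_of_ne htl.symm]
    exact zmod2_add_self _
  · intro v _ _ h
    have := congrFun h t
    simp only [Function.update_self] at this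
    exact zmod2_add_one_ne _ this
  · intro v _; exact Finset.mem_univ _
  · intro v _
    funext s
    rcases eq_or_ne s t with rfl | hs
    · simp only [Function.update_self]
      exact zmod2_add_one_one _
    · rw [Function.update_of_ne hs, Function.update_of_ne hs]

/-- For a ≠ 0, exactly half the vectors have nonzero dot product with a. -/
lemma card_dot_ne_zero {k : ℕ} (hk : 1 ≤ k) (a : Fin k → ZMod 2) (ha : a ≠ 0) :
    (Finset.univ.filter fun v : Fin k → ZMod 2 => ∑ i, a i * v i ≠ 0).card = 2 ^ (k - 1) := by
  obtain ⟨t, ht⟩ : ∃ t, a t ≠ 0 := by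
    by_contra h
    push_neg at h
    exact ha (funext fun i => h i)
  have hat : a t = 1 := zmod2_ne_zero ht
  set f : (Fin k → ZMod 2) → ZMod 2 := fun v => ∑ i, a i * v i with hf
  set c : (Fin k → ZMod 2) → (Fin k → ZMod 2) := fun v => Function.update v t (v t + 1) with hc
  have hcc : ∀ v, c (c v) = v := by
    intro v
    funext s
    rcases eq_or_ne s t with rfl | hs
    · simp only [c, Function.update_self]
      exact zmod2_add_one_one _
    · simp only [c, Function.update_of_ne hs]
  have hfc : ∀ v, f (c v) = f v + 1 := by
    intro v
    simp only [f, c]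
    rw [Fintype.sum_eq_add_sum_compl t, Fintype.sum_eq_add_sum_compl t (fun i => a i * v i)]
    have h1 : ∀ s ∈ ({t}ᶜ : Finset (Fin k)), a s * Function.update v t (v t + 1) s = a s * v s := by
      intro s hs
      have hst : s ≠ t := by simpa using Finset.mem_compl.mp hs
      rw [Function.update_of_ne hst]
    rw [Finset.sum_congr rfl h1, Function.update_self, hat]
    ring
  have key : (Finset.univ.filter fun v => f v ≠ 0).card
      = (Finset.univ.filter fun v => ¬ (f v ≠ 0)).card := by
    refine Finset.card_bij' (fun v _ => c v) (fun v _ => c v) ?_ ?_ ?_ ?_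
    · intro v hv
      simp only [Finset.mem_filter, Finset.mem_univ, true_and, not_not] at hv ⊢
      rw [hfc, zmod2_ne_zero hv]
      decide
    · intro v hv
      simp only [Finset.mem_filter, Finset.mem_univ, true_and, not_not] at hv ⊢
      rw [hfc, hv]
      decide
    · intro v _; exact hcc v
    · intro v _; exact hcc v
  have hsplit := Finset.card_filter_add_card_filter_not
    (s := (Finset.univ : Finset (Fin k → ZMod 2))) (fun v => f v ≠ 0)
  have hcard : (Finset.univ : Finset (Fin k → ZMod 2)).card = 2 ^ k := by
    simp [Finset.card_univ]
  have hpow : 2 ^ k = 2 * 2 ^ (k - 1) := by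
    conv_lhs => rw [show k = (k-1) + 1 by omega]
    ring
  rw [hcard] at hsplit
  generalize hA : (Finset.univ.filter fun v => f v ≠ 0).card = A at key hsplit
  generalize hB : (Finset.univ.filter fun v => ¬ (f v ≠ 0)).card = B at key hsplit
  omega

/-- The sum over all vectors of (a·v)(b·v) vanishes when k ≥ 3. -/
lemma sum_dot_mul_dot {k : ℕ} (hk : 3 ≤ k) (a b : Fin k → ZMod 2) :
    ∑ v : Fin k → ZMod 2, (∑ i, a i * v i) * (∑ i, b i * v i) = 0 := by
  have expand : ∀ v : Fin k → ZMod 2,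
      (∑ i, a i * v i) * (∑ i, b i * v i) = ∑ i, ∑ l, (a i * b l) * (v i * v l) := by
    intro v
    rw [Finset.sum_mul_sum]
    exact Finset.sum_congr rfl fun i _ => Finset.sum_congr rfl fun l _ => by ring
  rw [Finset.sum_congr rfl fun v _ => expand v]
  rw [Finset.sum_comm]
  refine Finset.sum_eq_zero fun i _ => ?_
  rw [Finset.sum_comm]
  refine Finset.sum_eq_zero fun l _ => ?_
  rw [← Finset.mul_sum, sum_coord_mul k hk i l, mul_zero]

section Columns

variable {k : ℕ} {S : Fin k → Fin (2 ^ k - 1) → ZMod 2}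
  (hS : Set.range (fun j i => S i j) = {v : Fin k → ZMod 2 | v ≠ 0})

include hS in
lemma col_ne_zero (j : Fin (2 ^ k - 1)) : (fun i => S i j) ≠ 0 := by
  have : (fun i => S i j) ∈ Set.range (fun j i => S i j) := ⟨j, rfl⟩
  rw [hS] at this
  exact this

include hS in
lemma col_image : (Finset.univ.image (fun j i => S i j))
    = Finset.univ.filter (fun v : Fin k → ZMod 2 => v ≠ 0) := by
  apply Finset.coe_injective
  rw [Finset.coe_image, Finset.coe_univ, Set.image_univ, hS, Finset.coe_filter]
  simp

lemma card_filter_ne_zero :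
    (Finset.univ.filter (fun v : Fin k → ZMod 2 => v ≠ 0)).card = 2 ^ k - 1 := by
  rw [Finset.filter_ne', Finset.card_erase_of_mem (Finset.mem_univ _), Finset.card_univ]
  simp

include hS in
lemma col_injective : Function.Injective (fun j i => S i j) := by
  rw [← Set.injOn_univ, ← Finset.coe_univ]
  apply Finset.injOn_of_card_image_eq
  rw [col_image hS, card_filter_ne_zero, Finset.card_univ, Fintype.card_fin]

include hS in
lemma col_surj {v : Fin k → ZMod 2} (hv : v ≠ 0) : ∃ j, (fun i => S i j) = v := by
  have : v ∈ Set.range (fun j i => S i j) := by rw [hS]; exact hv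
  exact this

include hS in
lemma col_card_transfer (P : (Fin k → ZMod 2) → Prop) [DecidablePred P] (hP0 : ¬ P 0) :
    (Finset.univ.filter fun j => P (fun i => S i j)).card
      = (Finset.univ.filter fun v => P v).card := by
  refine Finset.card_bij (fun j _ => fun i => S i j) ?_ ?_ ?_
  · intro j hj
    simp only [Finset.mem_filter, Finset.mem_univ, true_and] at hj ⊢
    exact hj
  · intro j1 _ j2 _ h
    exact col_injective hS h
  · intro v hv
    simp only [Finset.mem_filter, Finset.mem_univ, true_and] at hv
    have hv0 : v ≠ 0 := fun h => hP0 (h ▸ hv)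
    obtain ⟨j, hj⟩ := col_surj hS hv0
    exact ⟨j, by simp [hj, hv], hj⟩

include hS in
lemma col_sum_transfer (F : (Fin k → ZMod 2) → ZMod 2) (hF0 : F 0 = 0) :
    ∑ j, F (fun i => S i j) = ∑ v : Fin k → ZMod 2, F v := by
  have h1 : ∑ j, F (fun i => S i j)
      = ∑ v ∈ Finset.univ.filter (fun v : Fin k → ZMod 2 => v ≠ 0), F v := by
    refine Finset.sum_bij (fun j _ => fun i => S i j) ?_ ?_ ?_ ?_
    · intro j _
      simp only [Finset.mem_filter, Finset.mem_univ, true_and]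
      exact col_ne_zero hS j
    · intro j1 _ j2 _ h
      exact col_injective hS h
    · intro v hv
      simp only [Finset.mem_filter, Finset.mem_univ, true_and] at hv
      obtain ⟨j, hj⟩ := col_surj hS hv
      exact ⟨j, Finset.mem_univ _, hj⟩
    · intro j _; rfl
  have h2 := Finset.add_sum_erase Finset.univ F (Finset.mem_univ (0 : Fin k → ZMod 2))
  rw [hF0, zero_add] at h2
  rw [h1, Finset.filter_ne', h2]

end Columns


lemma my_geom_sum_two (k : ℕ) : ∑ i ∈ Finset.range k, 2 ^ i = 2 ^ k - 1 := by
  induction k with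
  | zero => simp
  | succ k ih =>
    rw [Finset.sum_range_succ, ih]
    have : 1 ≤ 2 ^ k := Nat.one_le_two_pow
    have : 2 ^ (k+1) = 2 * 2 ^ k := by ring
    omega

lemma griesmer_shift (k m d : ℕ) (hk : 1 ≤ k) :
    griesmerBound k (m * 2 ^ (k - 1) + d) = m * (2 ^ k - 1) + griesmerBound k d := by
  unfold griesmerBound
  have hterm : ∀ i ∈ Finset.range k,
      (m * 2 ^ (k - 1) + d + 2 ^ i - 1) / 2 ^ i
        = m * 2 ^ (k - 1 - i) + (d + 2 ^ i - 1) / 2 ^ i := by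
    intro i hi
    have hik : i ≤ k - 1 := by
      have := Finset.mem_range.mp hi; omega
    have hsplit : (2:ℕ) ^ (k - 1) = 2 ^ i * 2 ^ (k - 1 - i) := by
      rw [← pow_add]; congr 1; omega
    have hpos : 0 < (2:ℕ) ^ i := Nat.pow_pos (by norm_num)
    have harr : m * 2 ^ (k - 1) + d + 2 ^ i - 1
        = 2 ^ i * (m * 2 ^ (k - 1 - i)) + (d + 2 ^ i - 1) := by
      rw [hsplit]
      generalize (2:ℕ) ^ i = A at hpos ⊢
      generalize (2:ℕ) ^ (k - 1 - i) = B
      have : m * (A * B) = A * (m * B) := by ring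
      omega
    rw [harr, Nat.mul_add_div hpos]
  rw [Finset.sum_congr rfl hterm, Finset.sum_add_distrib]
  congr 1
  rw [← Finset.mul_sum]
  congr 1
  have := Finset.sum_range_reflect (fun i => (2:ℕ) ^ i) k
  rw [show (∑ i ∈ Finset.range k, 2 ^ (k - 1 - i)) = ∑ i ∈ Finset.range k, 2 ^ i from this]
  exact my_geom_sum_two k

theorem stmt1 (k m n d : ℕ) (hk : 3 ≤ k) (hd : 1 ≤ d)
    (S : Fin k → Fin (2 ^ k - 1) → ZMod 2)
    (hS : Set.range (fun j i => S i j) = {v : Fin k → ZMod 2 | v ≠ 0})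
    (G : Fin k → Fin n → ZMod 2)
    (hrank : Module.finrank (ZMod 2) (Submodule.span (ZMod 2) (Set.range G)) = k)
    (hmd : HasMinDist (Submodule.span (ZMod 2) (Set.range G)) d) :
    Module.finrank (ZMod 2) (Submodule.span (ZMod 2)
        (Set.range fun i => Sum.elim (fun p : Fin m × Fin (2 ^ k - 1) => S i p.2) (G i))) = k ∧
    HasMinDist (Submodule.span (ZMod 2)
        (Set.range fun i => Sum.elim (fun p : Fin m × Fin (2 ^ k - 1) => S i p.2) (G i)))
      (m * 2 ^ (k - 1) + d) ∧
    ((SelfOrthogonal (Submodule.span (ZMod 2) (Set.range G)) ∧ n = griesmerBound k d) ↔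
      (SelfOrthogonal (Submodule.span (ZMod 2)
          (Set.range fun i => Sum.elim (fun p : Fin m × Fin (2 ^ k - 1) => S i p.2) (G i))) ∧
        m * (2 ^ k - 1) + n = griesmerBound k (m * 2 ^ (k - 1) + d))) := by
  have hk1 : 1 ≤ k := by omega
  set G' : Fin k → (Fin m × Fin (2 ^ k - 1)) ⊕ Fin n → ZMod 2 :=
    fun i => Sum.elim (fun p : Fin m × Fin (2 ^ k - 1) => S i p.2) (G i) with hG'
  -- linear independence of G
  have hli : LinearIndependent (ZMod 2) G := by
    rw [linearIndependent_iff_card_eq_finrank_span, Fintype.card_fin]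
    exact hrank.symm
  -- evaluation lemmas
  have hGapp : ∀ (a : Fin k → ZMod 2) (j : Fin n), (∑ i, a i • G i) j = ∑ i, a i * G i j := by
    intro a j; simp [Finset.sum_apply]
  have hG'inl : ∀ (a : Fin k → ZMod 2) (p : Fin m × Fin (2 ^ k - 1)),
      (∑ i, a i • G' i) (Sum.inl p) = ∑ i, a i * S i p.2 := by
    intro a p; simp [Finset.sum_apply, hG']
  have hG'inr : ∀ (a : Fin k → ZMod 2) (j : Fin n),
      (∑ i, a i • G' i) (Sum.inr j) = ∑ i, a i * G i j := by
    intro a j; simp [Finset.sum_apply, hG']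
  have hcw_ne : ∀ a : Fin k → ZMod 2, a ≠ 0 → (∑ i, a i • G i) ≠ 0 := by
    intro a ha h
    exact ha (funext fun i => Fintype.linearIndependent_iff.mp hli a h i)
  -- membership characterizations
  have hmemC : ∀ x : Fin n → ZMod 2,
      x ∈ Submodule.span (ZMod 2) (Set.range G) ↔ ∃ a : Fin k → ZMod 2, ∑ i, a i • G i = x :=
    fun x => Submodule.mem_span_range_iff_exists_fun (ZMod 2)
  have hmemC' : ∀ x : ((Fin m × Fin (2 ^ k - 1)) ⊕ Fin n) → ZMod 2,
      x ∈ Submodule.span (ZMod 2) (Set.range G') ↔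
        ∃ a : Fin k → ZMod 2, ∑ i, a i • G' i = x :=
    fun x => Submodule.mem_span_range_iff_exists_fun (ZMod 2)
  have hcwmem : ∀ a : Fin k → ZMod 2, (∑ i, a i • G i) ∈ Submodule.span (ZMod 2) (Set.range G) :=
    fun a => (hmemC _).mpr ⟨a, rfl⟩
  have hcwmem' : ∀ a : Fin k → ZMod 2,
      (∑ i, a i • G' i) ∈ Submodule.span (ZMod 2) (Set.range G') :=
    fun a => (hmemC' _).mpr ⟨a, rfl⟩
  -- simplex column weight
  have hsimplex : ∀ a : Fin k → ZMod 2, a ≠ 0 →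
      (Finset.univ.filter fun j : Fin (2 ^ k - 1) => (∑ i, a i * S i j) ≠ 0).card
        = 2 ^ (k - 1) := by
    intro a ha
    have := col_card_transfer hS (P := fun v => (∑ i, a i * v i) ≠ 0) (by simp)
    rw [this]
    exact card_dot_ne_zero hk1 a ha
  -- the weight of a nonzero codeword of C'
  have hwt' : ∀ a : Fin k → ZMod 2, a ≠ 0 →
      wt (∑ i, a i • G' i) = m * 2 ^ (k - 1) + wt (∑ i, a i • G i) := by
    intro a ha
    unfold wt
    rw [Finset.card_filter, Finset.card_filter, Fintype.sum_sum_type]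
    congr 1
    · rw [Fintype.sum_prod_type]
      have hinner : ∀ u : Fin m,
          (∑ j : Fin (2 ^ k - 1),
            if (∑ i, a i • G' i) (Sum.inl (u, j)) ≠ 0 then 1 else 0) = 2 ^ (k - 1) := by
        intro u
        rw [← Finset.card_filter]
        have : (Finset.univ.filter fun j : Fin (2 ^ k - 1) =>
            (∑ i, a i • G' i) (Sum.inl (u, j)) ≠ 0)
            = Finset.univ.filter fun j : Fin (2 ^ k - 1) => (∑ i, a i * S i j) ≠ 0 := by
          apply Finset.filter_congr
          intro j _
          rw [hG'inl]
        rw [this]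
        exact hsimplex a ha
      rw [Finset.sum_congr rfl fun u _ => hinner u]
      simp [Finset.sum_const, Finset.card_univ]
    · refine Finset.sum_congr rfl fun j _ => ?_
      rw [hG'inr, hGapp]
  -- inner products agree
  have hio : ∀ a b : Fin k → ZMod 2,
      (∑ idx, (∑ i, a i • G' i) idx * (∑ i, b i • G' i) idx)
        = ∑ j, (∑ i, a i • G i) j * (∑ i, b i • G i) j := by
    intro a b
    rw [Fintype.sum_sum_type]
    have hleft : (∑ p : Fin m × Fin (2 ^ k - 1),
        (∑ i, a i • G' i) (Sum.inl p) * (∑ i, b i • G' i) (Sum.inl p)) = 0 := by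
      rw [Fintype.sum_prod_type]
      refine Finset.sum_eq_zero fun u _ => ?_
      have : (∑ j : Fin (2 ^ k - 1),
          (∑ i, a i • G' i) (Sum.inl (u, j)) * (∑ i, b i • G' i) (Sum.inl (u, j)))
          = ∑ j : Fin (2 ^ k - 1), (∑ i, a i * S i j) * (∑ i, b i * S i j) := by
        refine Finset.sum_congr rfl fun j _ => ?_
        rw [hG'inl, hG'inl]
      rw [this]
      rw [col_sum_transfer hS (F := fun v => (∑ i, a i * v i) * (∑ i, b i * v i)) (by simp)]
      exact sum_dot_mul_dot hk a b
    rw [hleft, zero_add]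
    refine Finset.sum_congr rfl fun j _ => ?_
    rw [hG'inr, hG'inr, hGapp, hGapp]
  -- linear independence of G'
  have hli' : LinearIndependent (ZMod 2) G' := by
    rw [Fintype.linearIndependent_iff]
    intro g hg i
    have hzero : (∑ i, g i • G i) = 0 := by
      funext j
      rw [hGapp, ← hG'inr g j, hg]
      rfl
    exact Fintype.linearIndependent_iff.mp hli g hzero i
  have hcw'_ne : ∀ a : Fin k → ZMod 2, a ≠ 0 → (∑ i, a i • G' i) ≠ 0 := by
    intro a ha h
    exact ha (funext fun i => Fintype.linearIndependent_iff.mp hli' a h i)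
  refine ⟨?_, ?_, ?_⟩
  · rw [finrank_span_eq_card hli', Fintype.card_fin]
  · constructor
    · obtain ⟨x, hxC, hx0, hxwt⟩ := hmd.1
      obtain ⟨a, rfl⟩ := (hmemC x).mp hxC
      have ha : a ≠ 0 := by
        rintro rfl
        exact hx0 (by simp)
      exact ⟨∑ i, a i • G' i, hcwmem' a, hcw'_ne a ha, by rw [hwt' a ha, hxwt]⟩
    · intro x hxC' hx0
      obtain ⟨a, rfl⟩ := (hmemC' x).mp hxC'
      have ha : a ≠ 0 := by
        rintro rfl
        exact hx0 (by simp)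
      rw [hwt' a ha]
      have := hmd.2 (∑ i, a i • G i) (hcwmem a) (hcw_ne a ha)
      omega
  · have hg : griesmerBound k (m * 2 ^ (k - 1) + d)
        = m * (2 ^ k - 1) + griesmerBound k d := griesmer_shift k m d hk1
    constructor
    · rintro ⟨hso, hn⟩
      constructor
      · intro x hx y hy
        obtain ⟨a, rfl⟩ := (hmemC' x).mp hx
        obtain ⟨b, rfl⟩ := (hmemC' y).mp hy
        rw [hio a b]
        exact hso _ (hcwmem a) _ (hcwmem b)
      · omega
    · rintro ⟨hso, hn⟩
      constructor
      · intro x hx y hy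
        obtain ⟨a, rfl⟩ := (hmemC x).mp hx
        obtain ⟨b, rfl⟩ := (hmemC y).mp hy
        rw [← hio a b]
        exact hso _ (hcwmem' a) _ (hcwmem' b)
      · omega
end

section
/- Let C be a binary self-orthogonal [n,k,d] code with k ≥ 2 and d ≡ 2 (mod 4), and let c ∈ C be a codeword with wt(c) = d. Then the residual code Res(C,c), i.e., the image of C under the projection of F_2^n onto the n−d coordinates outside the support of c, is a binary linear code of length n−d and dimension k−1 whose minimum distance is at least d/2 + 1. -/
open Finset

lemma zmod2_ne_one (a : ZMod 2) (h : a ≠ 0) : a = 1 := by revert a; decide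

lemma zmod2_add_ne (a b : ZMod 2) :
    a + b ≠ 0 ↔ (a = 0 ∧ b ≠ 0) ∨ (a ≠ 0 ∧ b = 0) := by revert a b; decide

lemma zmod2_add_eq_zero (a b : ZMod 2) (h : a + b = 0) : a = b := by revert a b; decide

theorem stmt2 (n k d : ℕ) (hk : 2 ≤ k) (hd : d % 4 = 2)
    (C : Submodule (ZMod 2) (Fin n → ZMod 2))
    (hdim : Module.finrank (ZMod 2) C = k)
    (hso : SelfOrthogonal C)
    (hmd : HasMinDist C d)
    (c : Fin n → ZMod 2) (hc : c ∈ C) (hwt : wt c = d) :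
    Fintype.card {i : Fin n // c i = 0} = n - d ∧
    Module.finrank (ZMod 2)
        (Submodule.map
          (LinearMap.funLeft (ZMod 2) (ZMod 2) (fun j : {i : Fin n // c i = 0} => (j : Fin n)))
          C) = k - 1 ∧
    ∀ x ∈ Submodule.map
        (LinearMap.funLeft (ZMod 2) (ZMod 2) (fun j : {i : Fin n // c i = 0} => (j : Fin n))) C,
      x ≠ 0 → d / 2 + 1 ≤ wt x := by
  classical
  set L := LinearMap.funLeft (ZMod 2) (ZMod 2)
      (fun j : {i : Fin n // c i = 0} => (j : Fin n)) with hL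
  -- Part 1
  have h1 : Fintype.card {i : Fin n // c i = 0} = n - d := by
    have hsplit := Finset.card_filter_add_card_filter_not
      (s := (univ : Finset (Fin n))) (p := fun i => c i = 0)
    have hcard : Fintype.card {i : Fin n // c i = 0}
        = (univ.filter fun i => c i = 0).card := Fintype.card_subtype _
    unfold wt at hwt
    rw [hcard]
    simp only [ne_eq, Finset.card_univ, Fintype.card_fin] at hsplit hwt ⊢
    omega
  -- key lemma: codewords supported in supp(c) are 0 or c
  have key : ∀ x ∈ C, (∀ i, c i = 0 → x i = 0) → x = 0 ∨ x = c := by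
    intro x hx h
    by_cases hx0 : x = 0
    · exact Or.inl hx0
    right
    have hdx := hmd.2 x hx hx0
    have hsub : (univ.filter fun i => x i ≠ 0) ⊆ (univ.filter fun i => c i ≠ 0) := by
      intro i hi
      simp only [mem_filter, mem_univ, true_and, ne_eq] at hi ⊢
      exact fun hci => hi (h i hci)
    have heq : (univ.filter fun i => x i ≠ 0) = (univ.filter fun i => c i ≠ 0) := by
      apply Finset.eq_of_subset_of_card_le hsub
      have := Finset.card_le_card hsub
      unfold wt at hdx hwt
      omega
    funext i
    by_cases hci : c i = 0
    · rw [h i hci, hci]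
    · have hi : i ∈ (univ.filter fun i => x i ≠ 0) := by
        rw [heq]; simp [hci]
      simp only [mem_filter, mem_univ, true_and, ne_eq] at hi
      rw [zmod2_ne_one _ hi, zmod2_ne_one _ hci]
  have hc0 : c ≠ 0 := by
    intro h
    have : wt c = 0 := by simp [h, wt]
    omega
  -- Part 2
  have h2 : Module.finrank (ZMod 2) (Submodule.map L C) = k - 1 := by
    set L' : C →ₗ[ZMod 2] ({i : Fin n // c i = 0} → ZMod 2) := L.comp C.subtype with hL'
    have hrange : LinearMap.range L' = Submodule.map L C := by
      rw [hL', LinearMap.range_comp, Submodule.range_subtype]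
    have hker : LinearMap.ker L' = Submodule.span (ZMod 2) {(⟨c, hc⟩ : C)} := by
      ext ⟨x, hx⟩
      constructor
      · intro hxk
        have hx0 : ∀ i, c i = 0 → x i = 0 := by
          intro i hi
          have h0 : L' ⟨x, hx⟩ = 0 := hxk
          exact congrFun h0 ⟨i, hi⟩
        rcases key x hx hx0 with h | h
        · have : (⟨x, hx⟩ : C) = 0 := Subtype.ext h
          rw [this]; exact Submodule.zero_mem _
        · have : (⟨x, hx⟩ : C) = ⟨c, hc⟩ := Subtype.ext h
          rw [this]; exact Submodule.mem_span_singleton_self _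
      · intro hxs
        rcases Submodule.mem_span_singleton.mp hxs with ⟨a, ha⟩
        have hLc : L' ⟨c, hc⟩ = 0 := by
          funext j; exact j.2
        rw [LinearMap.mem_ker, ← ha, map_smul, hLc, smul_zero]
    have hkdim : Module.finrank (ZMod 2) (LinearMap.ker L') = 1 := by
      rw [hker]
      exact finrank_span_singleton (by
        intro h
        exact hc0 (congrArg Subtype.val h))
    have hrn := LinearMap.finrank_range_add_finrank_ker L'
    rw [hrange, hkdim, hdim] at hrn
    omega
  refine ⟨h1, h2, ?_⟩
  -- Part 3
  rintro y ⟨x, hx, rfl⟩ hy0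
  set A := univ.filter (fun i => x i ≠ 0 ∧ c i ≠ 0) with hA
  set B := univ.filter (fun i => x i = 0 ∧ c i ≠ 0) with hB
  set W := univ.filter (fun i => x i ≠ 0 ∧ c i = 0) with hW
  have hx0 : x ≠ 0 := by
    rintro rfl; exact hy0 (map_zero _)
  have hLc : L c = 0 := by funext j; exact j.2
  have hxc : x ≠ c := by
    rintro rfl; exact hy0 hLc
  have hdx : d ≤ wt x := hmd.2 x hx hx0
  have hxc0 : x + c ≠ 0 := by
    intro h
    exact hxc (funext fun i => zmod2_add_eq_zero _ _ (congrFun h i))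
  have hdxc : d ≤ wt (x + c) := hmd.2 _ (C.add_mem hx hc) hxc0
  -- wt x = A + W
  have hsplit1 : wt x = A.card + W.card := by
    unfold wt
    rw [← Finset.card_filter_add_card_filter_not
      (s := univ.filter fun i => x i ≠ 0) (p := fun i => c i ≠ 0)]
    congr 1
    · rw [Finset.filter_filter]
    · rw [Finset.filter_filter]
      apply congrArg Finset.card
      apply Finset.filter_congr
      intro i _
      simp [not_not]
  -- wt c = A + B
  have hsplit2 : wt c = A.card + B.card := by
    unfold wt
    rw [← Finset.card_filter_add_card_filter_not
      (s := univ.filter fun i => c i ≠ 0) (p := fun i => x i ≠ 0)]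
    congr 1
    · rw [Finset.filter_filter]
      apply congrArg Finset.card
      apply Finset.filter_congr
      intro i _
      tauto
    · rw [Finset.filter_filter]
      apply congrArg Finset.card
      apply Finset.filter_congr
      intro i _
      simp only [not_not]
      tauto
  -- wt (x + c) = B + W
  have hsplit3 : wt (x + c) = B.card + W.card := by
    unfold wt
    have hpt : ∀ i, ((x + c) i ≠ 0) ↔ ((x i = 0 ∧ c i ≠ 0) ∨ (x i ≠ 0 ∧ c i = 0)) := by
      intro i
      exact zmod2_add_ne (x i) (c i)
    have hdisj : Disjoint B W := by
      rw [hB, hW, Finset.disjoint_filter]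
      intro i _ h1 h2
      exact h2.1 h1.1
    rw [Finset.filter_congr (fun i _ => hpt i), Finset.filter_or,
      Finset.card_union_of_disjoint hdisj]
  -- wt (L x) = W
  have hwty : wt (L x) = W.card := by
    unfold wt
    refine Finset.card_bij (fun j _ => (j : Fin n)) ?_ ?_ ?_
    · intro j hj
      simp only [mem_filter, mem_univ, true_and] at hj
      rw [hW, Finset.mem_filter]
      exact ⟨mem_univ _, hj, j.2⟩
    · intro j1 _ j2 _ h
      exact Subtype.ext h
    · intro b hb
      simp only [hW, mem_filter, mem_univ, true_and] at hb
      exact ⟨⟨b, hb.2⟩, by simpa [hL, LinearMap.funLeft_apply] using hb.1, rfl⟩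
  -- orthogonality: A even
  have horth : 2 ∣ A.card := by
    have hsum := hso x hx c hc
    have hcast : (A.card : ZMod 2) = 0 := by
      have e1 : ∑ i ∈ A, x i * c i = ∑ i, x i * c i := by
        apply Finset.sum_filter_of_ne
        intro i _ h
        exact ⟨left_ne_zero_of_mul h, right_ne_zero_of_mul h⟩
      have e2 : ∑ i ∈ A, x i * c i = ∑ i ∈ A, (1 : ZMod 2) := by
        apply Finset.sum_congr rfl
        intro i hi
        simp only [hA, mem_filter, mem_univ, true_and] at hi
        rw [zmod2_ne_one _ hi.1, zmod2_ne_one _ hi.2, one_mul]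
      rw [← hsum, ← e1, e2]
      simp
    exact (ZMod.natCast_eq_zero_iff A.card 2).mp hcast
  rw [hwty]
  omega
end

section
/- Let N, k, D be integers with N > 2^k and D > 2, and suppose there exists a binary self-orthogonal [N,k,D] code. Then there exists a binary self-orthogonal [N−2, k] code with minimum distance at least D−2. -/
open Finset

theorem stmt8 (N k D : ℕ) (hN : 2 ^ k < N) (hD : 2 < D)
    (hex : ∃ C : Submodule (ZMod 2) (Fin N → ZMod 2),
      Module.finrank (ZMod 2) C = k ∧ SelfOrthogonal C ∧ HasMinDist C D) :
    ∃ C : Submodule (ZMod 2) (Fin (N - 2) → ZMod 2),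
      Module.finrank (ZMod 2) C = k ∧ SelfOrthogonal C ∧
      ∀ x ∈ C, x ≠ 0 → D - 2 ≤ wt x := by
  classical
  obtain ⟨C, hrk, hso, _hex1, hmin⟩ := hex
  -- pigeonhole: two coordinates agree on all codewords
  have hcard : Fintype.card (Fin k → ZMod 2) < Fintype.card (Fin N) := by
    simpa [ZMod.card] using hN
  let b : Module.Basis (Fin k) (ZMod 2) C := (Module.finBasis (ZMod 2) C).reindex (finCongr hrk)
  obtain ⟨i, j, hij, hbij⟩ := Fintype.exists_ne_map_eq_of_card_lt
    (fun a : Fin N => fun m : Fin k => ((b m : C) : Fin N → ZMod 2) a) hcard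
  have hagree : ∀ x ∈ C, x i = x j := by
    intro x hx
    have hmem : (⟨x, hx⟩ : C) ∈ Submodule.span (ZMod 2) (Set.range b) := by
      rw [b.span_eq]; trivial
    have key : ∀ (c : C), c ∈ Submodule.span (ZMod 2) (Set.range b) →
        (c : Fin N → ZMod 2) i = (c : Fin N → ZMod 2) j := by
      intro c hc
      induction hc using Submodule.span_induction with
      | mem c hc =>
        obtain ⟨m, rfl⟩ := hc
        exact congrFun hbij m
      | zero => rfl
      | add u v hu hv ihu ihv => simp [ihu, ihv]
      | smul a u hu ihu => simp [ihu]
    exact key ⟨x, hx⟩ hmem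
  -- the two punctured coordinates
  set s : Finset (Fin N) := ({i, j} : Finset (Fin N))ᶜ with hs_def
  have hcard_ij : ({i, j} : Finset (Fin N)).card = 2 := Finset.card_pair hij
  have hs : s.card = N - 2 := by
    rw [hs_def, Finset.card_compl, hcard_ij, Fintype.card_fin]
  let e : Fin (N - 2) ↪o Fin N := s.orderEmbOfFin hs
  have himg : Finset.image (⇑e) Finset.univ = s := by
    ext a
    simp only [Finset.mem_image, Finset.mem_univ, true_and]
    constructor
    · rintro ⟨m, rfl⟩; exact Finset.orderEmbOfFin_mem s hs m
    · intro ha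
      have : a ∈ Set.range (⇑(s.orderEmbOfFin hs)) := by
        rw [Finset.range_orderEmbOfFin]; exact ha
      obtain ⟨m, rfl⟩ := this; exact ⟨m, rfl⟩
  have hinj : Function.Injective (⇑e) := e.injective
  -- sums over the punctured coordinates
  have hsum : ∀ f : Fin N → ZMod 2, ∑ m, f (e m) = ∑ a ∈ s, f a := by
    intro f
    rw [← himg, Finset.sum_image (fun x _ y _ h => hinj h)]
  have hcompl : sᶜ = ({i, j} : Finset (Fin N)) := by rw [hs_def, compl_compl]
  -- the projection map
  let π : (Fin N → ZMod 2) →ₗ[ZMod 2] (Fin (N - 2) → ZMod 2) :=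
    LinearMap.funLeft (ZMod 2) (ZMod 2) ⇑e
  refine ⟨C.map π, ?_, ?_, ?_⟩
  · -- finrank
    have hinjmap : Function.Injective (π.submoduleMap C) := by
      rw [injective_iff_map_eq_zero]
      intro c hc
      have hc' : π (c : Fin N → ZMod 2) = 0 := by
        have := congrArg (Subtype.val) hc
        simpa using this
      by_contra hne
      have hne' : (c : Fin N → ZMod 2) ≠ 0 := by
        intro h; exact hne (Subtype.ext h)
      have hD' : D ≤ wt (c : Fin N → ZMod 2) := hmin _ c.2 hne'
      -- wt c ≤ 2 since c vanishes on s
      have hzero : ∀ a ∈ s, (c : Fin N → ZMod 2) a = 0 := by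
        intro a ha
        have : a ∈ Set.range (⇑(s.orderEmbOfFin hs)) := by
          rw [Finset.range_orderEmbOfFin]; exact ha
        obtain ⟨m, rfl⟩ := this
        have := congrFun hc' m
        simpa [π, LinearMap.funLeft_apply] using this
      have hsubset : (Finset.univ.filter fun a => (c : Fin N → ZMod 2) a ≠ 0) ⊆ ({i, j} : Finset (Fin N)) := by
        intro a ha
        simp only [Finset.mem_filter] at ha
        by_contra hnot
        exact ha.2 (hzero a (by rw [hs_def]; simpa using hnot))
      have : wt (c : Fin N → ZMod 2) ≤ 2 := by
        calc wt (c : Fin N → ZMod 2) ≤ ({i, j} : Finset (Fin N)).card :=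
              Finset.card_le_card hsubset
          _ = 2 := hcard_ij
      omega
    have : Function.Bijective (π.submoduleMap C) :=
      ⟨hinjmap, LinearMap.submoduleMap_surjective π C⟩
    rw [← hrk]
    exact (LinearEquiv.finrank_eq (LinearEquiv.ofBijective _ this)).symm
  · -- self-orthogonal
    rintro u hu v hv
    obtain ⟨x, hx, rfl⟩ := hu
    obtain ⟨y, hy, rfl⟩ := hv
    have h1 : ∑ m, π x m * π y m = ∑ a ∈ s, x a * y a := by
      simpa [π, LinearMap.funLeft_apply] using hsum (fun a => x a * y a)
    have h2 : ∑ a ∈ s, x a * y a + ∑ a ∈ sᶜ, x a * y a = ∑ a, x a * y a :=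
      Finset.sum_add_sum_compl s _
    have h3 : ∑ a ∈ sᶜ, x a * y a = 0 := by
      rw [hcompl, Finset.sum_pair hij, hagree x hx, hagree y hy]
      generalize (x j * y j) = t
      fin_cases t <;> rfl
    rw [hso x hx y hy, h3, add_zero] at h2
    rw [h1, h2]
  · -- weight bound
    rintro u hu hune
    obtain ⟨x, hx, rfl⟩ := hu
    have hxne : x ≠ 0 := by rintro rfl; exact hune (map_zero π)
    have hD' : D ≤ wt x := hmin x hx hxne
    -- card computation
    have himgfilter : (Finset.univ.filter fun m => π x m ≠ 0).image ⇑e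
        = s.filter fun a => x a ≠ 0 := by
      ext a
      simp only [Finset.mem_image, Finset.mem_filter, Finset.mem_univ, true_and]
      constructor
      · rintro ⟨m, hm, rfl⟩
        refine ⟨Finset.orderEmbOfFin_mem s hs m, ?_⟩
        simpa [π, LinearMap.funLeft_apply] using hm
      · rintro ⟨ha, hxa⟩
        have : a ∈ Set.range (⇑(s.orderEmbOfFin hs)) := by
          rw [Finset.range_orderEmbOfFin]; exact ha
        obtain ⟨m, rfl⟩ := this
        exact ⟨m, by simpa [π, LinearMap.funLeft_apply] using hxa, rfl⟩
    have hwt1 : wt (π x) = (s.filter fun a => x a ≠ 0).card := by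
      rw [wt, ← himgfilter, Finset.card_image_of_injective _ hinj]
    have hsplit : wt x = (s.filter fun a => x a ≠ 0).card
        + (sᶜ.filter fun a => x a ≠ 0).card := by
      rw [wt, ← Finset.union_compl s, Finset.filter_union,
        Finset.card_union_of_disjoint]
      exact Finset.disjoint_filter_filter (disjoint_compl_right)
    have hle2 : (sᶜ.filter fun a => x a ≠ 0).card ≤ 2 := by
      calc (sᶜ.filter fun a => x a ≠ 0).card ≤ sᶜ.card := Finset.card_filter_le _ _
        _ = 2 := by rw [hcompl, hcard_ij]
    omega
end

section
/- Let k ≥ 3 and let d ≥ 0 be an even integer. Suppose there exists a binary self-orthogonal [g(k,d+4), k, d+4] Griesmer code and that g(k,d+4) > 2^k. Then for every integer N with g(k,d+2)+1 ≤ N ≤ g(k,d+4)−1: (i) there exists a binary self-orthogonal [N,k] code with minimum distance d+2, and (ii) every binary self-orthogonal [N,k] code has minimum distance at most d+2. In other words, d_so(N,k) = d+2. -/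
open Finset

/- ### Arithmetic lemmas -/

lemma ceil_div_le {a b c : ℕ} (hb : 0 < b) : (a + b - 1) / b ≤ c ↔ a ≤ b * c := by
  rw [Nat.div_le_iff_le_mul_add_pred hb]
  omega

lemma ceil_div_half (a m : ℕ) (hm : 0 < m) :
    (a + 2 * m - 1) / (2 * m) = ((a + 1) / 2 + m - 1) / m := by
  have key : ∀ c : ℕ, ((a + 2 * m - 1) / (2 * m) ≤ c ↔ ((a + 1) / 2 + m - 1) / m ≤ c) := by
    intro c
    rw [ceil_div_le (by omega), ceil_div_le hm]
    have h2 : (a + 1) / 2 ≤ m * c ↔ a ≤ 2 * (m * c) := by omega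
    rw [h2, ← mul_assoc]
  exact le_antisymm ((key _).mpr le_rfl) ((key _).mp le_rfl)

lemma gb_zero (d : ℕ) : griesmerBound 0 d = 0 := by simp [griesmerBound]

lemma gb_succ (k d : ℕ) : griesmerBound (k + 1) d = d + griesmerBound k ((d + 1) / 2) := by
  unfold griesmerBound
  rw [Finset.sum_range_succ']
  have h0 : (d + 2 ^ 0 - 1) / 2 ^ 0 = d := by simp
  rw [h0]
  have hterm : ∀ i : ℕ, (d + 2 ^ (i + 1) - 1) / 2 ^ (i + 1)
      = ((d + 1) / 2 + 2 ^ i - 1) / 2 ^ i := by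
    intro i
    rw [pow_succ, mul_comm (2 ^ i) 2]
    exact ceil_div_half d (2 ^ i) (pow_pos (by norm_num) i)
  rw [Finset.sum_congr rfl (fun i _ => hterm i)]
  ring

lemma gb_mono {k d₁ d₂ : ℕ} (h : d₁ ≤ d₂) : griesmerBound k d₁ ≤ griesmerBound k d₂ := by
  apply Finset.sum_le_sum
  intro i _
  exact Nat.div_le_div_right (by omega)

lemma gb_strict_mono {k d₁ d₂ : ℕ} (hk : 1 ≤ k) (h : d₁ < d₂) :
    griesmerBound k d₁ < griesmerBound k d₂ := by
  obtain ⟨K, rfl⟩ : ∃ K, k = K + 1 := ⟨k - 1, by omega⟩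
  rw [gb_succ, gb_succ]
  have h2 : (d₁ + 1) / 2 ≤ (d₂ + 1) / 2 := by omega
  have := gb_mono (k := K) h2
  omega

lemma gb_step {K c : ℕ} (hK : 1 ≤ K) (hc : c % 2 = 0) :
    griesmerBound K (c + 2) = griesmerBound K (c + 1) + 1 := by
  obtain ⟨J, rfl⟩ : ∃ J, K = J + 1 := ⟨K - 1, by omega⟩
  rw [gb_succ, gb_succ]
  have : (c + 2 + 1) / 2 = (c + 1 + 1) / 2 := by omega
  rw [this]
  omega

lemma gb_delta {k d : ℕ} (hk : 3 ≤ k) (hd : d % 4 = 0) :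
    griesmerBound k (d + 4) = griesmerBound k (d + 2) + 3 := by
  obtain ⟨K, rfl⟩ : ∃ K, k = K + 1 := ⟨k - 1, by omega⟩
  rw [gb_succ, gb_succ]
  have h1 : (d + 4 + 1) / 2 = d / 2 + 2 := by omega
  have h2 : (d + 2 + 1) / 2 = d / 2 + 1 := by omega
  rw [h1, h2, gb_step (by omega) (by omega)]
  omega

/- ### ZMod 2 / weight lemmas -/

lemma zmod2_ne_iff {a b : ZMod 2} (h : a ≠ 0 ↔ b ≠ 0) : a = b := by
  revert h; revert a b; decide

lemma wt_le_card {ι : Type*} [Fintype ι] (x : ι → ZMod 2) : wt x ≤ Fintype.card ι :=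
  Finset.card_filter_le _ _

lemma cast_wt {ι : Type*} [Fintype ι] (x : ι → ZMod 2) :
    ((wt x : ℕ) : ZMod 2) = ∑ i, x i := by
  rw [← Finset.sum_filter_ne_zero (f := x) Finset.univ]
  rw [Finset.sum_congr rfl (fun i hi => ?_)]
  · rw [Finset.sum_const, wt, nsmul_eq_mul, mul_one]
  · have : x i ≠ 0 := (Finset.mem_filter.mp hi).2
    revert this; generalize x i = a; revert a; decide

lemma even_wt {ι : Type*} [Fintype ι] {C : Submodule (ZMod 2) (ι → ZMod 2)}
    (hso : SelfOrthogonal C) {x : ι → ZMod 2} (hx : x ∈ C) : 2 ∣ wt x := by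
  have h := hso x hx x hx
  have hsq : ∀ i, x i * x i = x i := by
    intro i; generalize x i = a; revert a; decide
  rw [Finset.sum_congr rfl (fun i _ => hsq i)] at h
  rw [← cast_wt] at h
  exact (ZMod.natCast_eq_zero_iff _ 2).mp h

/-- Weight of a sum: `wt (x+y) + 2c = wt x + wt y` where `c` is the intersection size,
whose parity is the inner product. -/
lemma wt_add {ι : Type*} [Fintype ι] [DecidableEq ι] (x y : ι → ZMod 2) :
    ∃ c : ℕ, wt (x + y) + 2 * c = wt x + wt y ∧ ((c : ℕ) : ZMod 2) = ∑ i, x i * y i := by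
  classical
  set Sx := Finset.univ.filter fun i => x i ≠ 0 with hSx
  set Sy := Finset.univ.filter fun i => y i ≠ 0 with hSy
  refine ⟨(Sx ∩ Sy).card, ?_, ?_⟩
  · have hset : (Finset.univ.filter fun i => (x + y) i ≠ 0) = (Sx ∪ Sy) \ (Sx ∩ Sy) := by
      ext i
      simp only [Finset.mem_filter, Finset.mem_univ, true_and, Finset.mem_sdiff,
        Finset.mem_union, Finset.mem_inter, hSx, hSy, Pi.add_apply]
      generalize x i = a; generalize y i = b
      revert a b; decide
    have h1 : ((Sx ∪ Sy) \ (Sx ∩ Sy)).card + (Sx ∩ Sy).card = (Sx ∪ Sy).card :=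
      Finset.card_sdiff_add_card_eq_card Finset.inter_subset_union
    have h2 := Finset.card_union_add_card_inter Sx Sy
    have hwt : wt (x + y) = ((Sx ∪ Sy) \ (Sx ∩ Sy)).card := by rw [wt, hset]
    have hwx : wt x = Sx.card := rfl
    have hwy : wt y = Sy.card := rfl
    omega
  · have hset : (Finset.univ.filter fun i => x i * y i ≠ 0) = Sx ∩ Sy := by
      ext i
      simp only [Finset.mem_filter, Finset.mem_univ, true_and, Finset.mem_inter, hSx, hSy]
      generalize x i = a; generalize y i = b
      revert a b; decide
    rw [← Finset.sum_filter_ne_zero (f := fun i => x i * y i) Finset.univ, hset]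
    rw [Finset.sum_congr rfl (fun i hi => ?_)]
    · rw [Finset.sum_const, nsmul_eq_mul, mul_one]
    · rw [hSx, hSy] at hi
      simp only [Finset.mem_inter, Finset.mem_filter, Finset.mem_univ, true_and] at hi
      obtain ⟨ha, hb⟩ := hi
      revert ha hb; generalize x i = a; generalize y i = b; revert a b; decide

/- ### Existence of nonzero codewords -/

lemma exists_ne_zero_of_finrank {ι : Type*} [Fintype ι]
    {C : Submodule (ZMod 2) (ι → ZMod 2)} {k : ℕ} (hrk : Module.finrank (ZMod 2) C = k)
    (hk : 1 ≤ k) : ∃ x ∈ C, x ≠ 0 := by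
  by_contra h
  push_neg at h
  have hbot : C = ⊥ := (Submodule.eq_bot_iff C).mpr h
  rw [hbot, finrank_bot] at hrk
  omega

/- ### The residual code construction -/

lemma residual_code {ι : Type} [Fintype ι] [DecidableEq ι]
    (C : Submodule (ZMod 2) (ι → ZMod 2)) (x₀ : ι → ZMod 2)
    (hx₀C : x₀ ∈ C) (hx₀ : x₀ ≠ 0)
    (hmin : ∀ y ∈ C, y ≠ 0 → wt x₀ ≤ wt y) (k : ℕ)
    (hrk : Module.finrank (ZMod 2) C = k + 1) :
    ∃ C' : Submodule (ZMod 2) ({i : ι // x₀ i = 0} → ZMod 2),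
      Fintype.card {i : ι // x₀ i = 0} + wt x₀ = Fintype.card ι ∧
      Module.finrank (ZMod 2) C' = k ∧
      ∀ y' ∈ C', y' ≠ 0 → ∃ y ∈ C, y ≠ 0 ∧ y ≠ x₀ ∧
        wt x₀ + 2 * wt y' = wt y + wt (y + x₀) := by
  classical
  set π : (ι → ZMod 2) →ₗ[ZMod 2] ({i : ι // x₀ i = 0} → ZMod 2) :=
    LinearMap.funLeft (ZMod 2) (ZMod 2) Subtype.val with hπ
  refine ⟨C.map π, ?_, ?_, ?_⟩
  · -- cardinality
    rw [Fintype.card_subtype]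
    have := Finset.card_filter_add_card_filter_not
      (s := (Finset.univ : Finset ι)) (fun i => x₀ i = 0)
    have hwt : (Finset.univ.filter fun i => ¬ x₀ i = 0).card = wt x₀ := rfl
    simpa [hwt, Finset.card_univ] using this
  · -- finrank
    set f : C →ₗ[ZMod 2] ({i : ι // x₀ i = 0} → ZMod 2) := π.comp C.subtype with hf
    have hrange : LinearMap.range f = C.map π := by
      rw [hf, LinearMap.range_comp, Submodule.range_subtype]
    have hker : LinearMap.ker f = Submodule.span (ZMod 2) {(⟨x₀, hx₀C⟩ : C)} := by
      apply le_antisymm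
      · intro c hc
        have hc' : ∀ i : {i : ι // x₀ i = 0}, (c : ι → ZMod 2) i.1 = 0 := by
          intro i
          have := LinearMap.mem_ker.mp hc
          exact congrFun this i
        by_cases hzero : (c : ι → ZMod 2) = 0
        · have : c = 0 := Subtype.ext hzero
          rw [this]; exact Submodule.zero_mem _
        · -- supp c ⊆ supp x₀, minimality forces c = x₀
          set y : ι → ZMod 2 := (c : ι → ZMod 2) with hy
          have hsub : (Finset.univ.filter fun i => y i ≠ 0) ⊆
              (Finset.univ.filter fun i => x₀ i ≠ 0) := by
            intro i hi
            simp only [Finset.mem_filter, Finset.mem_univ, true_and] at hi ⊢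
            by_cases hx0i : x₀ i = 0
            · exact absurd (hc' ⟨i, hx0i⟩) hi
            · exact hx0i
          have hle : wt y ≤ wt x₀ := Finset.card_le_card hsub
          have hge : wt x₀ ≤ wt y := hmin y c.2 hzero
          have hseteq : (Finset.univ.filter fun i => y i ≠ 0) =
              (Finset.univ.filter fun i => x₀ i ≠ 0) :=
            Finset.eq_of_subset_of_card_le hsub hge
          have hyx : y = x₀ := by
            funext i
            apply zmod2_ne_iff
            constructor
            · intro h
              have : i ∈ Finset.univ.filter fun i => y i ≠ 0 := by
                simp only [Finset.mem_filter, Finset.mem_univ, true_and]; exact h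
              rw [hseteq] at this
              simpa using this
            · intro h
              have : i ∈ Finset.univ.filter fun i => x₀ i ≠ 0 := by
                simp only [Finset.mem_filter, Finset.mem_univ, true_and]; exact h
              rw [← hseteq] at this
              simpa using this
          have : c = (⟨x₀, hx₀C⟩ : C) := Subtype.ext hyx
          rw [this]
          exact Submodule.mem_span_singleton_self _
      · rw [Submodule.span_le]
        intro c hc
        simp only [Set.mem_singleton_iff] at hc
        rw [hc]
        simp only [SetLike.mem_coe, LinearMap.mem_ker]
        funext i
        exact i.2
    have hrn := LinearMap.finrank_range_add_finrank_ker f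
    rw [hrange, hker, hrk] at hrn
    have h1 : Module.finrank (ZMod 2)
        (Submodule.span (ZMod 2) {(⟨x₀, hx₀C⟩ : C)}) = 1 := by
      apply finrank_span_singleton
      intro h
      exact hx₀ (by simpa using congrArg Subtype.val h)
    rw [h1] at hrn
    omega
  · -- weights
    intro y' hy' hy'0
    obtain ⟨y, hyC, hyπ⟩ := Submodule.mem_map.mp hy'
    have hy0 : y ≠ 0 := by
      rintro rfl
      rw [map_zero] at hyπ
      exact hy'0 hyπ.symm
    have hyx₀ : y ≠ x₀ := by
      rintro rfl
      apply hy'0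
      rw [← hyπ]
      funext i
      exact i.2
    refine ⟨y, hyC, hy0, hyx₀, ?_⟩
    -- finset computation
    set A := (Finset.univ.filter fun i => x₀ i ≠ 0) with hA
    set Sy := (Finset.univ.filter fun i => y i ≠ 0) with hSy
    have hwx : wt x₀ = A.card := rfl
    have hwy : wt y = Sy.card := rfl
    have hcard1 : (Sy ∩ A).card + (Sy \ A).card = Sy.card :=
      Finset.card_inter_add_card_sdiff Sy A
    have hcard2 : (A ∩ Sy).card + (A \ Sy).card = A.card :=
      Finset.card_inter_add_card_sdiff A Sy
    have hinter : (A ∩ Sy).card = (Sy ∩ A).card := by rw [Finset.inter_comm]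
    -- wt (y + x₀)
    have hset : (Finset.univ.filter fun i => (y + x₀) i ≠ 0) = (Sy \ A) ∪ (A \ Sy) := by
      ext i
      simp only [Finset.mem_filter, Finset.mem_univ, true_and, Finset.mem_union,
        Finset.mem_sdiff, hA, hSy, Pi.add_apply]
      generalize y i = a; generalize x₀ i = b
      revert a b; decide
    have hdisj : Disjoint (Sy \ A) (A \ Sy) := by
      apply Finset.disjoint_left.mpr
      intro i hi1 hi2
      simp only [Finset.mem_sdiff] at hi1 hi2
      exact hi2.2 hi1.1
    have hwyx : wt (y + x₀) = (Sy \ A).card + (A \ Sy).card := by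
      rw [wt, hset, Finset.card_union_of_disjoint hdisj]
    -- wt y' = |Sy \ A|
    have hwy' : wt y' = (Sy \ A).card := by
      have h1 : wt y' = Fintype.card {i' : {i : ι // x₀ i = 0} // y' i' ≠ 0} := by
        rw [Fintype.card_subtype]; rfl
      have h2 : Fintype.card {i' : {i : ι // x₀ i = 0} // y' i' ≠ 0}
          = Fintype.card {i : ι // x₀ i = 0 ∧ y i ≠ 0} := by
        apply Fintype.card_congr
        have hcong : ∀ i' : {i : ι // x₀ i = 0}, (y' i' ≠ 0) = (y i'.1 ≠ 0) := by
          intro i'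
          rw [← hyπ]
          rfl
        exact (Equiv.subtypeEquivRight (fun i' => iff_of_eq (hcong i'))).trans
          (Equiv.subtypeSubtypeEquivSubtypeInter (fun i => x₀ i = 0) (fun i => y i ≠ 0))
      rw [h1, h2, Fintype.card_subtype]
      congr 1
      ext i
      simp only [Finset.mem_filter, Finset.mem_univ, true_and, Finset.mem_sdiff, hA, hSy]
      tauto
    omega

/- ### The Griesmer bound -/

theorem griesmer_bound (k : ℕ) : ∀ {ι : Type} [Fintype ι] [DecidableEq ι]
    (C : Submodule (ZMod 2) (ι → ZMod 2)) (d : ℕ),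
    Module.finrank (ZMod 2) C = k → (∀ x ∈ C, x ≠ 0 → d ≤ wt x) →
    griesmerBound k d ≤ Fintype.card ι := by
  induction k with
  | zero => intro ι _ _ C d _ _; rw [gb_zero]; exact Nat.zero_le _
  | succ K IH =>
    intro ι _ _ C d hrk hw
    -- minimal weight codeword
    set W : Set ℕ := {w | ∃ x, x ∈ C ∧ x ≠ 0 ∧ wt x = w} with hW
    have hWne : W.Nonempty := by
      obtain ⟨x, hxC, hx0⟩ := exists_ne_zero_of_finrank hrk (by omega)
      exact ⟨wt x, x, hxC, hx0, rfl⟩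
    obtain ⟨x₀, hx₀C, hx₀0, hx₀w⟩ := Nat.sInf_mem hWne
    have hmin : ∀ y ∈ C, y ≠ 0 → wt x₀ ≤ wt y := by
      intro y hyC hy0
      rw [hx₀w]
      exact Nat.sInf_le ⟨y, hyC, hy0, rfl⟩
    have hde : d ≤ wt x₀ := hw x₀ hx₀C hx₀0
    obtain ⟨C', hcard, hrk', hwts⟩ := residual_code C x₀ hx₀C hx₀0 hmin K hrk
    have hw' : ∀ y' ∈ C', y' ≠ 0 → (wt x₀ + 1) / 2 ≤ wt y' := by
      intro y' hy' hy'0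
      obtain ⟨y, hyC, hy0, hyx₀, heq⟩ := hwts y' hy' hy'0
      have h1 : wt x₀ ≤ wt y := hmin y hyC hy0
      have h2 : wt x₀ ≤ wt (y + x₀) := by
        apply hmin
        · exact C.add_mem hyC hx₀C
        · intro h
          apply hyx₀
          funext i
          have hi := congrFun h i
          simp only [Pi.add_apply, Pi.zero_apply] at hi
          revert hi
          generalize y i = a; generalize x₀ i = b
          revert a b; decide
      omega
    have hIH := IH C' ((wt x₀ + 1) / 2) hrk' hw'
    calc griesmerBound (K + 1) d ≤ griesmerBound (K + 1) (wt x₀) := gb_mono hde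
      _ = wt x₀ + griesmerBound K ((wt x₀ + 1) / 2) := gb_succ K (wt x₀)
      _ ≤ Fintype.card ι := by omega

/- ### Improved bound for self-orthogonal codes with d ≡ 2 mod 4 -/

theorem so_improved_bound {ι : Type} [Fintype ι] [DecidableEq ι]
    (C : Submodule (ZMod 2) (ι → ZMod 2)) (k D : ℕ) (hk : 2 ≤ k)
    (hrk : Module.finrank (ZMod 2) C = k) (hso : SelfOrthogonal C)
    (hmd : HasMinDist C D) (hD : D % 4 = 2) :
    griesmerBound k D < Fintype.card ι := by
  obtain ⟨⟨x₀, hx₀C, hx₀0, hx₀w⟩, hminD⟩ := hmd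
  obtain ⟨K, rfl⟩ : ∃ K, k = K + 1 := ⟨k - 1, by omega⟩
  have hmin : ∀ y ∈ C, y ≠ 0 → wt x₀ ≤ wt y := by
    intro y hy hy0; rw [hx₀w]; exact hminD y hy hy0
  obtain ⟨C', hcard, hrk', hwts⟩ := residual_code C x₀ hx₀C hx₀0 hmin K hrk
  have hw' : ∀ y' ∈ C', y' ≠ 0 → D / 2 + 1 ≤ wt y' := by
    intro y' hy' hy'0
    obtain ⟨y, hyC, hy0, hyx₀, heq⟩ := hwts y' hy' hy'0
    have hyadd : y + x₀ ∈ C := C.add_mem hyC hx₀C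
    have hyadd0 : y + x₀ ≠ 0 := by
      intro h
      apply hyx₀
      funext i
      have hi := congrFun h i
      simp only [Pi.add_apply, Pi.zero_apply] at hi
      revert hi
      generalize y i = a; generalize x₀ i = b
      revert a b; decide
    have h1 : D ≤ wt y := hminD y hyC hy0
    have h2 : D ≤ wt (y + x₀) := hminD _ hyadd hyadd0
    -- not both equal D
    have hnotboth : ¬ (wt y = D ∧ wt (y + x₀) = D) := by
      rintro ⟨hwy, hwyx⟩
      obtain ⟨c, hc1, hc2⟩ := wt_add y x₀
      have hcz : ((c : ℕ) : ZMod 2) = 0 := by rw [hc2]; exact hso y hyC x₀ hx₀C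
      have hcdvd : 2 ∣ c := (ZMod.natCast_eq_zero_iff _ 2).mp hcz
      rw [hwy, hwyx, hx₀w] at hc1
      omega
    rw [hx₀w] at heq
    omega
  have hgb := griesmer_bound K C' (D / 2 + 1) hrk' hw'
  have hlt : griesmerBound K (D / 2) < griesmerBound K (D / 2 + 1) :=
    gb_strict_mono (by omega) (by omega)
  have hsucc : griesmerBound (K + 1) D = D + griesmerBound K (D / 2) := by
    rw [gb_succ]
    congr 2
    omega
  rw [hx₀w] at hcard
  omega

/- ### Minimum distance is attained -/

lemma exists_hasMinDist {ι : Type*} [Fintype ι] (C : Submodule (ZMod 2) (ι → ZMod 2))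
    {k : ℕ} (hrk : Module.finrank (ZMod 2) C = k) (hk : 1 ≤ k) :
    ∃ e, HasMinDist C e := by
  have hWne : {w | ∃ x, x ∈ C ∧ x ≠ 0 ∧ wt x = w}.Nonempty := by
    obtain ⟨x, hxC, hx0⟩ := exists_ne_zero_of_finrank hrk hk
    exact ⟨wt x, x, hxC, hx0, rfl⟩
  obtain ⟨x₀, hx₀C, hx₀0, hx₀w⟩ := Nat.sInf_mem hWne
  exact ⟨sInf {w | ∃ x, x ∈ C ∧ x ≠ 0 ∧ wt x = w},
    ⟨x₀, hx₀C, hx₀0, hx₀w⟩, fun y hy hy0 => Nat.sInf_le ⟨y, hy, hy0, rfl⟩⟩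

/- ### Upper bound on minimum distance of short self-orthogonal codes -/

lemma minDist_le_of_short {N k d : ℕ} (hk : 1 ≤ k) (hd : 2 ∣ d)
    (C : Submodule (ZMod 2) (Fin N → ZMod 2))
    (hrk : Module.finrank (ZMod 2) C = k) (hso : SelfOrthogonal C)
    (e : ℕ) (hmd : HasMinDist C e) (hN : N + 1 ≤ griesmerBound k (d + 4)) :
    e ≤ d + 2 := by
  obtain ⟨⟨x, hxC, hx0, hxw⟩, hmin⟩ := hmd
  have heven : 2 ∣ e := hxw ▸ even_wt hso hxC
  have hgb : griesmerBound k e ≤ N := by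
    have := griesmer_bound k C e hrk hmin
    simpa using this
  by_contra hcon
  push_neg at hcon
  have he4 : d + 4 ≤ e := by omega
  have := gb_mono (k := k) he4
  omega

/- ### The main construction: delete two equal columns, pad with zeros -/

lemma construct_code {gg N k d'' : ℕ} (C : Submodule (ZMod 2) (Fin gg → ZMod 2))
    (i₀ j₀ : Fin gg) (hij : i₀ ≠ j₀) (hcol : ∀ x ∈ C, x i₀ = x j₀)
    (hso : SelfOrthogonal C) (hrk : Module.finrank (ZMod 2) C = k)
    (hmin : ∀ x ∈ C, x ≠ 0 → d'' + 2 ≤ wt x) (hd'' : 1 ≤ d'') (hN : gg ≤ N + 2) :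
    ∃ C' : Submodule (ZMod 2) (Fin N → ZMod 2),
      Module.finrank (ZMod 2) C' = k ∧ SelfOrthogonal C' ∧
      ∀ y ∈ C', y ≠ 0 → d'' ≤ wt y := by
  classical
  set σ := {l : Fin gg // l ≠ i₀ ∧ l ≠ j₀} with hσ
  -- cardinality of σ
  have hcardσ : Fintype.card σ + 2 = gg := by
    show Fintype.card {l : Fin gg // l ≠ i₀ ∧ l ≠ j₀} + 2 = gg
    rw [Fintype.card_subtype]
    have hneg : (Finset.univ.filter fun l : Fin gg => ¬(l ≠ i₀ ∧ l ≠ j₀)) = {i₀, j₀} := by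
      ext l
      simp only [Finset.mem_filter, Finset.mem_univ, true_and, Finset.mem_insert,
        Finset.mem_singleton]
      tauto
    have := Finset.card_filter_add_card_filter_not
      (s := (Finset.univ : Finset (Fin gg))) (fun l => l ≠ i₀ ∧ l ≠ j₀)
    rw [hneg, Finset.card_pair hij] at this
    simpa [Finset.card_univ] using this
  -- embedding into Fin N
  have hembne : Nonempty (σ ↪ Fin N) := by
    apply Function.Embedding.nonempty_of_card_le
    simp only [Fintype.card_fin]
    omega
  obtain ⟨E⟩ := hembne
  -- the linear map
  set Φ : (Fin gg → ZMod 2) →ₗ[ZMod 2] (Fin N → ZMod 2) :=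
    { toFun := fun x m => ∑ l : σ, if E l = m then x l.1 else 0
      map_add' := by
        intro x y
        funext m
        simp only [Pi.add_apply, ← Finset.sum_add_distrib]
        apply Finset.sum_congr rfl
        intro l _
        by_cases h : E l = m <;> simp [h]
      map_smul' := by
        intro c x
        funext m
        simp only [Pi.smul_apply, smul_eq_mul, RingHom.id_apply, Finset.mul_sum]
        apply Finset.sum_congr rfl
        intro l _
        by_cases h : E l = m <;> simp [h] } with hΦ
  have hΦapp : ∀ (x : Fin gg → ZMod 2) (l : σ), Φ x (E l) = x l.1 := by
    intro x l
    show (∑ l' : σ, if E l' = E l then x l'.1 else 0) = x l.1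
    simp only [EmbeddingLike.apply_eq_iff_eq]
    exact Finset.sum_ite_eq' Finset.univ l (fun l' => x l'.1) |>.trans (by simp)
  have hΦout : ∀ (x : Fin gg → ZMod 2) (m : Fin N), (∀ l : σ, E l ≠ m) → Φ x m = 0 := by
    intro x m hm
    show (∑ l' : σ, if E l' = m then x l'.1 else 0) = 0
    apply Finset.sum_eq_zero
    intro l' _
    rw [if_neg (hm l')]
  refine ⟨C.map Φ, ?_, ?_, ?_⟩
  · -- finrank
    set f : C →ₗ[ZMod 2] (Fin N → ZMod 2) := Φ.comp C.subtype with hf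
    have hrange : LinearMap.range f = C.map Φ := by
      rw [hf, LinearMap.range_comp, Submodule.range_subtype]
    have hker : LinearMap.ker f = ⊥ := by
      rw [Submodule.eq_bot_iff]
      intro c hc
      have hcm : ∀ l : σ, (c : Fin gg → ZMod 2) l.1 = 0 := by
        intro l
        have h0 : Φ (c : Fin gg → ZMod 2) = 0 := LinearMap.mem_ker.mp hc
        have := congrFun h0 (E l)
        rw [hΦapp] at this
        exact this
      by_contra hc0
      have hc0' : (c : Fin gg → ZMod 2) ≠ 0 := by
        intro h
        exact hc0 (Subtype.ext h)
      have hsub : (Finset.univ.filter fun i => (c : Fin gg → ZMod 2) i ≠ 0) ⊆ {i₀, j₀} := by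
        intro i hi
        simp only [Finset.mem_filter, Finset.mem_univ, true_and] at hi
        simp only [Finset.mem_insert, Finset.mem_singleton]
        by_contra hcon
        push_neg at hcon
        exact hi (hcm ⟨i, hcon⟩)
      have hwt2 : wt (c : Fin gg → ZMod 2) ≤ 2 := by
        calc wt (c : Fin gg → ZMod 2) ≤ ({i₀, j₀} : Finset (Fin gg)).card :=
              Finset.card_le_card hsub
          _ = 2 := Finset.card_pair hij
      have := hmin _ c.2 hc0'
      omega
    have hrn := LinearMap.finrank_range_add_finrank_ker f
    rw [hrange, hker, hrk, finrank_bot] at hrn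
    omega
  · -- self-orthogonal
    intro y₁ hy₁ y₂ hy₂
    obtain ⟨x₁, hx₁C, rfl⟩ := Submodule.mem_map.mp hy₁
    obtain ⟨x₂, hx₂C, rfl⟩ := Submodule.mem_map.mp hy₂
    have hsum1 : ∑ m, Φ x₁ m * Φ x₂ m = ∑ l : σ, x₁ l.1 * x₂ l.1 := by
      have h0 : ∀ m ∈ Finset.univ, m ∉ Finset.univ.image E → Φ x₁ m * Φ x₂ m = 0 := by
        intro m _ hm
        have : ∀ l : σ, E l ≠ m := by
          intro l hl
          exact hm (Finset.mem_image.mpr ⟨l, Finset.mem_univ l, hl⟩)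
        rw [hΦout x₁ m this, zero_mul]
      rw [← Finset.sum_subset (Finset.subset_univ (Finset.univ.image E)) h0]
      rw [Finset.sum_image (fun l _ l' _ h => E.injective h)]
      apply Finset.sum_congr rfl
      intro l _
      rw [hΦapp, hΦapp]
    have hsum2 : ∑ l : σ, x₁ l.1 * x₂ l.1
        = ∑ i ∈ Finset.univ \ {i₀, j₀}, x₁ i * x₂ i := by
      refine (Finset.sum_subtype (p := fun i : Fin gg => i ≠ i₀ ∧ i ≠ j₀)
        (Finset.univ \ {i₀, j₀}) (fun i => ?_) (fun i => x₁ i * x₂ i)).symm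
      simp only [Finset.mem_sdiff, Finset.mem_univ, true_and, Finset.mem_insert,
        Finset.mem_singleton]
      tauto
    have hsdiff := Finset.sum_sdiff (f := fun i => x₁ i * x₂ i)
      (Finset.subset_univ ({i₀, j₀} : Finset (Fin gg)))
    have hpair : ∑ i ∈ ({i₀, j₀} : Finset (Fin gg)), x₁ i * x₂ i = 0 := by
      rw [Finset.sum_pair hij, hcol x₁ hx₁C, hcol x₂ hx₂C]
      generalize x₁ j₀ * x₂ j₀ = a
      revert a; decide
    have htot := hso x₁ hx₁C x₂ hx₂C
    rw [hsum1, hsum2]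
    rw [hpair, htot] at hsdiff
    simpa using hsdiff
  · -- min weight
    intro y hy hy0
    obtain ⟨x, hxC, rfl⟩ := Submodule.mem_map.mp hy
    have hx0 : x ≠ 0 := by
      rintro rfl
      rw [map_zero] at hy0
      exact hy0 rfl
    -- wt x ≤ wt (Φ x) + 2
    have hsupp : (Finset.univ.filter fun m => Φ x m ≠ 0)
        = (Finset.univ.filter fun l : σ => x l.1 ≠ 0).image E := by
      ext m
      simp only [Finset.mem_filter, Finset.mem_univ, true_and, Finset.mem_image]
      constructor
      · intro hm
        by_cases hex : ∃ l : σ, E l = m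
        · obtain ⟨l, hl⟩ := hex
          refine ⟨l, ?_, hl⟩
          rw [← hl, hΦapp] at hm
          exact hm
        · push_neg at hex
          exact absurd (hΦout x m hex) hm
      · rintro ⟨l, hl, rfl⟩
        rw [hΦapp]
        exact hl
    have hwtΦ : wt (Φ x) = (Finset.univ.filter fun l : σ => x l.1 ≠ 0).card := by
      rw [wt, hsupp, Finset.card_image_of_injective _ E.injective]
    have hcards : (Finset.univ.filter fun l : σ => x l.1 ≠ 0).card
        = (Finset.univ.filter fun i : Fin gg => (i ≠ i₀ ∧ i ≠ j₀) ∧ x i ≠ 0).card := by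
      have h1 : (Finset.univ.filter fun l : σ => x l.1 ≠ 0).card
          = Fintype.card {l : σ // x l.1 ≠ 0} := (Fintype.card_subtype _).symm
      have h2 : Fintype.card {l : σ // x l.1 ≠ 0}
          = Fintype.card {i : Fin gg // (i ≠ i₀ ∧ i ≠ j₀) ∧ x i ≠ 0} :=
        Fintype.card_congr
          (Equiv.subtypeSubtypeEquivSubtypeInter (fun l => l ≠ i₀ ∧ l ≠ j₀) (fun i => x i ≠ 0))
      rw [h1, h2, Fintype.card_subtype]
    have hsub : (Finset.univ.filter fun i => x i ≠ 0)
        ⊆ (Finset.univ.filter fun i : Fin gg => (i ≠ i₀ ∧ i ≠ j₀) ∧ x i ≠ 0) ∪ {i₀, j₀} := by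
      intro i hi
      simp only [Finset.mem_filter, Finset.mem_univ, true_and] at hi
      simp only [Finset.mem_union, Finset.mem_filter, Finset.mem_univ, true_and,
        Finset.mem_insert, Finset.mem_singleton]
      by_cases h1 : i = i₀
      · tauto
      · by_cases h2 : i = j₀ <;> tauto
    have hwtx : wt x ≤ wt (Φ x) + 2 := by
      have h3 := Finset.card_le_card hsub
      have h4 := Finset.card_union_le
        (Finset.univ.filter fun i : Fin gg => (i ≠ i₀ ∧ i ≠ j₀) ∧ x i ≠ 0)
        ({i₀, j₀} : Finset (Fin gg))
      have h5 : ({i₀, j₀} : Finset (Fin gg)).card = 2 := Finset.card_pair hij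
      have hwx : wt x = (Finset.univ.filter fun i => x i ≠ 0).card := rfl
      omega
    have := hmin x hxC hx0
    omega

/- ### Two equal columns via pigeonhole -/

lemma exists_equal_columns {gg k : ℕ} (C : Submodule (ZMod 2) (Fin gg → ZMod 2))
    (hrk : Module.finrank (ZMod 2) C = k) (hbig : 2 ^ k < gg) :
    ∃ i₀ j₀ : Fin gg, i₀ ≠ j₀ ∧ ∀ x ∈ C, x i₀ = x j₀ := by
  classical
  have b : Module.Basis (Fin k) (ZMod 2) C := Module.finBasisOfFinrankEq (ZMod 2) C hrk
  set col : Fin gg → (Fin k → ZMod 2) := fun i t => ((b t : C) : Fin gg → ZMod 2) i with hcol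
  have hcard : Fintype.card (Fin k → ZMod 2) < Fintype.card (Fin gg) := by
    simp only [Fintype.card_fun, Fintype.card_fin, ZMod.card]
    exact hbig
  obtain ⟨i₀, j₀, hne, heq⟩ := Fintype.exists_ne_map_eq_of_card_lt col hcard
  refine ⟨i₀, j₀, hne, ?_⟩
  intro x hx
  have hrepr : (⟨x, hx⟩ : C) = ∑ t, b.repr ⟨x, hx⟩ t • b t := (b.sum_repr _).symm
  have hx' : x = ∑ t, b.repr ⟨x, hx⟩ t • ((b t : C) : Fin gg → ZMod 2) := by
    have := congrArg (fun v : C => (v : Fin gg → ZMod 2)) hrepr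
    simpa only [Submodule.coe_sum, Submodule.coe_smul] using this
  have heval : ∀ i : Fin gg, x i = ∑ t, b.repr ⟨x, hx⟩ t * ((b t : C) : Fin gg → ZMod 2) i := by
    intro i
    conv_lhs => rw [hx']
    simp [Finset.sum_apply]
  rw [heval i₀, heval j₀]
  apply Finset.sum_congr rfl
  intro t _
  have : col i₀ t = col j₀ t := congrFun heq t
  rw [hcol] at this
  simp only at this
  rw [this]

/- ### Main theorem -/

theorem stmt9 (k d : ℕ) (hk : 3 ≤ k) (hd2 : 2 ∣ d)
    (hbig : 2 ^ k < griesmerBound k (d + 4))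
    (hex : ∃ C : Submodule (ZMod 2) (Fin (griesmerBound k (d + 4)) → ZMod 2),
      Module.finrank (ZMod 2) C = k ∧ SelfOrthogonal C ∧ HasMinDist C (d + 4)) :
    ∀ N : ℕ, griesmerBound k (d + 2) + 1 ≤ N → N ≤ griesmerBound k (d + 4) - 1 →
      (∃ C : Submodule (ZMod 2) (Fin N → ZMod 2),
        Module.finrank (ZMod 2) C = k ∧ SelfOrthogonal C ∧ HasMinDist C (d + 2)) ∧
      (∀ C : Submodule (ZMod 2) (Fin N → ZMod 2),
        Module.finrank (ZMod 2) C = k → SelfOrthogonal C →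
        ∀ e : ℕ, HasMinDist C e → e ≤ d + 2) := by
  intro N hN1 hN2
  obtain ⟨C₀, hrk₀, hso₀, hmd₀⟩ := hex
  have hd4 : d % 4 = 0 ∨ d % 4 = 2 := by omega
  rcases hd4 with hd4 | hd4
  · -- main case : d ≡ 0 mod 4
    have hδ : griesmerBound k (d + 4) = griesmerBound k (d + 2) + 3 := gb_delta hk hd4
    have hNlow : griesmerBound k (d + 4) ≤ N + 2 := by omega
    have hNhigh : N + 1 ≤ griesmerBound k (d + 4) := by omega
    -- two equal columns
    obtain ⟨i₀, j₀, hij, hcols⟩ := exists_equal_columns C₀ hrk₀ hbig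
    -- construct code of length N
    have hmin₀ : ∀ x ∈ C₀, x ≠ 0 → (d + 2) + 2 ≤ wt x := by
      intro x hx hx0
      have := hmd₀.2 x hx hx0
      omega
    obtain ⟨C', hrk', hso', hmin'⟩ :=
      construct_code C₀ i₀ j₀ hij hcols hso₀ hrk₀ hmin₀ (by omega) hNlow
    constructor
    · -- existence
      refine ⟨C', hrk', hso', ?_⟩
      obtain ⟨e', hmd'⟩ := exists_hasMinDist C' hrk' (by omega)
      have hlow : d + 2 ≤ e' := by
        obtain ⟨⟨x, hxC, hx0, hxw⟩, _⟩ := hmd'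
        rw [← hxw]
        exact hmin' x hxC hx0
      have hhigh : e' ≤ d + 2 :=
        minDist_le_of_short (by omega) hd2 C' hrk' hso' e' hmd' hNhigh
      have : e' = d + 2 := by omega
      rwa [this] at hmd'
    · -- upper bound
      intro C hrkC hsoC e hmde
      exact minDist_le_of_short (by omega) hd2 C hrkC hsoC e hmde hNhigh
  · -- impossible case : d ≡ 2 mod 4
    exfalso
    have h := so_improved_bound C₀ k (d + 4) (by omega) hrk₀ hso₀ hmd₀ (by omega)
    simp only [Fintype.card_fin] at h
    omega
end

section
/- For each of the parameter triples (n,k,d) ∈ {(45,6,22), (53,6,26), (60,6,30), (47,7,22), (71,7,34), (79,7,38), (93,7,46), (102,7,50), (109,7,54), (117,7,58), (124,7,62)}, there is no binary self-orthogonal [n,k,d] code, i.e., no k-dimensional self-orthogonal subspace of F_2^n whose minimum distance equals d. -/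
open Finset

/-- The overlap of two binary vectors: the number of coordinates where both are nonzero. -/
def ov {ι : Type*} [Fintype ι] (x y : ι → ZMod 2) : ℕ :=
  (Finset.univ.filter fun i => x i ≠ 0 ∧ y i ≠ 0).card

lemma wt_add_ov {ι : Type*} [Fintype ι] (x y : ι → ZMod 2) :
    wt (x + y) + 2 * ov x y = wt x + wt y := by
  have key : ∀ a b : ZMod 2, ((if a + b ≠ 0 then 1 else 0) + 2 * (if a ≠ 0 ∧ b ≠ 0 then 1 else 0) : ℕ)
      = (if a ≠ 0 then 1 else 0) + (if b ≠ 0 then 1 else 0) := by decide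
  unfold wt ov
  rw [Finset.card_filter, Finset.card_filter, Finset.card_filter, Finset.card_filter,
    Finset.mul_sum, ← Finset.sum_add_distrib, ← Finset.sum_add_distrib]
  refine Finset.sum_congr rfl fun i _ => ?_
  simpa using key (x i) (y i)

lemma ov_cast {ι : Type*} [Fintype ι] (x y : ι → ZMod 2) :
    (ov x y : ZMod 2) = ∑ i, x i * y i := by
  have key : ∀ a b : ZMod 2, (((if a ≠ 0 ∧ b ≠ 0 then 1 else 0) : ℕ) : ZMod 2) = a * b := by decide
  unfold ov
  rw [Finset.card_filter, Nat.cast_sum]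
  exact Finset.sum_congr rfl fun i _ => key (x i) (y i)

lemma ov_self {ι : Type*} [Fintype ι] (x : ι → ZMod 2) : ov x x = wt x := by
  unfold ov wt
  congr 1
  exact Finset.filter_congr fun i _ => by tauto

lemma wt_sub_ov {ι : Type*} [Fintype ι] (x y : ι → ZMod 2) :
    (Finset.univ.filter fun i => x i = 0 ∧ y i ≠ 0).card + ov x y = wt y := by
  unfold ov wt
  have h1 : (Finset.univ.filter fun i => x i = 0 ∧ y i ≠ 0)
      = (Finset.univ.filter fun i : ι => y i ≠ 0).filter (fun i => x i = 0) := by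
    rw [Finset.filter_filter]; exact Finset.filter_congr fun i _ => by tauto
  have h2 : (Finset.univ.filter fun i => x i ≠ 0 ∧ y i ≠ 0)
      = (Finset.univ.filter fun i : ι => y i ≠ 0).filter (fun i => ¬ x i = 0) := by
    rw [Finset.filter_filter]; exact Finset.filter_congr fun i _ => by tauto
  rw [h1, h2, Finset.card_filter_add_card_filter_not]

lemma griesmerBound_succ (k d : ℕ) (hd : 1 ≤ d) :
    griesmerBound (k + 1) d = griesmerBound k ((d + 1) / 2) + d := by
  unfold griesmerBound
  rw [Finset.sum_range_succ']
  congr 1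
  · refine Finset.sum_congr rfl fun i _ => ?_
    have h2 : (1:ℕ) ≤ 2 ^ i := Nat.one_le_two_pow
    rw [pow_succ, mul_comm (2^i) 2, ← Nat.div_div_eq_div_mul,
      show d + 2 * 2 ^ i - 1 = (d + 1) + (2 ^ i - 1) * 2 by omega,
      Nat.add_mul_div_right _ _ (by norm_num : (0:ℕ) < 2)]
    congr 1
    omega
  · simp

/-- The Griesmer bound for binary linear codes. -/
theorem griesmer_aux : ∀ (k : ℕ), ∀ {ι : Type} [Fintype ι] [DecidableEq ι],
    ∀ (d : ℕ) (C : Submodule (ZMod 2) (ι → ZMod 2)),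
    1 ≤ d → Module.finrank (ZMod 2) C = k → (∀ x ∈ C, x ≠ 0 → d ≤ wt x) →
    griesmerBound k d ≤ Fintype.card ι := by
  intro k
  induction k with
  | zero => intro ι _ _ d C _ _ _; simp [griesmerBound]
  | succ k ih =>
    intro ι _ _ d C hd hrk hmin
    have hCbot : C ≠ ⊥ := by
      intro h
      rw [h, finrank_bot] at hrk
      omega
    obtain ⟨y0, hy0C, hy0⟩ := (Submodule.ne_bot_iff C).mp hCbot
    have hSne : {u : ℕ | ∃ y ∈ C, y ≠ 0 ∧ wt y = u}.Nonempty := ⟨wt y0, y0, hy0C, hy0, rfl⟩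
    set w := sInf {u : ℕ | ∃ y ∈ C, y ≠ 0 ∧ wt y = u} with hwdef
    obtain ⟨x, hxC, hx0, hxw⟩ := Nat.sInf_mem hSne
    rw [← hwdef] at hxw
    have hminw : ∀ y ∈ C, y ≠ 0 → w ≤ wt y := fun y hy hy0 => Nat.sInf_le ⟨y, hy, hy0, rfl⟩
    have hdw : d ≤ w := hxw ▸ hmin x hxC hx0
    have hcard' : Fintype.card {i // x i = 0} + wt x = Fintype.card ι := by
      rw [Fintype.card_subtype]
      unfold wt
      simpa using Finset.card_filter_add_card_filter_not (s := Finset.univ)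
        (p := fun i => x i = 0)
    set π : (ι → ZMod 2) →ₗ[ZMod 2] ({i // x i = 0} → ZMod 2) :=
      LinearMap.funLeft (ZMod 2) (ZMod 2) Subtype.val with hπdef
    have hπ : ∀ y : ι → ZMod 2, wt (π y) = (Finset.univ.filter fun i => x i = 0 ∧ y i ≠ 0).card := by
      intro y
      unfold wt
      simp only [hπdef, LinearMap.funLeft_apply]
      rw [← Fintype.card_subtype, ← Fintype.card_subtype]
      exact Fintype.card_congr
        (Equiv.subtypeSubtypeEquivSubtypeInter (fun i => x i = 0) (fun i => y i ≠ 0))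
    set C' := C.map π with hC'
    set f := π.domRestrict C with hf
    have hπx : π x = 0 := by
      funext i
      simpa [hπdef, LinearMap.funLeft_apply] using i.2
    have hker : LinearMap.ker f = Submodule.span (ZMod 2) {(⟨x, hxC⟩ : C)} := by
      ext ⟨y, hyC⟩
      simp only [LinearMap.mem_ker, hf, LinearMap.domRestrict_apply,
        Submodule.mem_span_singleton]
      constructor
      · intro h
        have hy0' : ∀ i, x i = 0 → y i = 0 := by
          intro i hi
          have := congrFun h ⟨i, hi⟩
          simpa [hπdef, LinearMap.funLeft_apply] using this
        by_cases hy : y = 0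
        · exact ⟨0, Subtype.ext (by simp [hy])⟩
        · have hsub : (Finset.univ.filter fun i => y i ≠ 0) ⊆
              (Finset.univ.filter fun i => x i ≠ 0) := by
            intro i hi
            simp only [Finset.mem_filter, Finset.mem_univ, true_and] at *
            intro hxi
            exact hi (hy0' i hxi)
          have hge : wt x ≤ wt y := hxw ▸ hminw y hyC hy
          have hseteq : (Finset.univ.filter fun i => y i ≠ 0)
              = (Finset.univ.filter fun i => x i ≠ 0) :=
            Finset.eq_of_subset_of_card_le hsub hge
          have hyx : y = x := by
            funext i
            by_cases hxi : x i = 0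
            · rw [hy0' i hxi, hxi]
            · have hyi : y i ≠ 0 := by
                have hmem : i ∈ Finset.univ.filter fun i => x i ≠ 0 := by simp [hxi]
                rw [← hseteq] at hmem
                simpa using hmem
              have h2 : ∀ a : ZMod 2, a ≠ 0 → a = 1 := by decide
              rw [h2 _ hyi, h2 _ hxi]
          exact ⟨1, Subtype.ext (by simp [hyx])⟩
      · rintro ⟨c, hc⟩
        have hc' : c • x = y := congrArg Subtype.val hc
        have h01 : ∀ c : ZMod 2, c = 0 ∨ c = 1 := by decide
        rcases h01 c with rfl | rfl
        · rw [← hc']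
          simp
        · rw [← hc']
          simpa using hπx
    have hrange : LinearMap.range f = C' := by
      rw [hf]
      exact LinearMap.range_domRestrict C π
    have hxne : (⟨x, hxC⟩ : C) ≠ 0 := by
      simp [Submodule.mk_eq_zero, hx0]
    have hrk' : Module.finrank (ZMod 2) C' = k := by
      have h1 := LinearMap.finrank_range_add_finrank_ker f
      rw [hrange, hker, finrank_span_singleton hxne, hrk] at h1
      omega
    have hmin' : ∀ z ∈ C', z ≠ 0 → (d + 1) / 2 ≤ wt z := by
      rintro z hz hz0
      obtain ⟨y, hyC, rfl⟩ := hz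
      have hy0 : y ≠ 0 := by rintro rfl; simp at hz0
      have hyx : y ≠ x := by rintro rfl; exact hz0 hπx
      have hxy0 : x + y ≠ 0 := by
        intro h
        apply hyx
        funext i
        have h2 := congrFun h i
        simp only [Pi.add_apply, Pi.zero_apply] at h2
        have key : ∀ a b : ZMod 2, a + b = 0 → b = a := by decide
        exact key _ _ h2
      have h1 := wt_add_ov x y
      have h2 := wt_sub_ov x y
      have h3 := hminw y hyC hy0
      have h4 := hminw (x + y) (C.add_mem hxC hyC) hxy0
      have h5 := hπ y
      rw [hxw] at h1
      omega
    have hIH := ih ((d + 1) / 2) C' (by omega) hrk' hmin'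
    have hGB := griesmerBound_succ k d hd
    omega

/-- Key lemma: a self-orthogonal code with `d ≡ 2 (mod 4)` has a doubly-even
subcode of codimension 1 and minimum distance at least `d + 2`, to which the
Griesmer bound applies. -/
lemma no_SO {n k d : ℕ} (hd4 : d % 4 = 2) (hk : 1 ≤ k)
    (hg : n < griesmerBound (k - 1) (d + 2)) :
    ¬ ∃ C : Submodule (ZMod 2) (Fin n → ZMod 2),
      Module.finrank (ZMod 2) C = k ∧ SelfOrthogonal C ∧ HasMinDist C d := by
  rintro ⟨C, hrk, hso, ⟨⟨x0, hx0C, hx0ne, hx0w⟩, hmd⟩⟩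
  have hov : ∀ y ∈ C, ∀ z ∈ C, 2 ∣ ov y z := by
    intro y hy z hz
    have h := hso y hy z hz
    rw [← ov_cast] at h
    exact (ZMod.natCast_eq_zero_iff _ 2).mp h
  have heven : ∀ y ∈ C, 2 ∣ wt y := fun y hy => ov_self y ▸ hov y hy y hy
  have hwt0 : wt (0 : Fin n → ZMod 2) = 0 := by simp [wt]
  let C0 : Submodule (ZMod 2) (Fin n → ZMod 2) :=
    { carrier := {y | y ∈ C ∧ wt y % 4 = 0}
      add_mem' := by
        rintro a b ⟨haC, ha4⟩ ⟨hbC, hb4⟩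
        refine ⟨C.add_mem haC hbC, ?_⟩
        have h1 := wt_add_ov a b
        obtain ⟨m, hm⟩ := hov a haC b hbC
        omega
      zero_mem' := ⟨C.zero_mem, by rw [hwt0]⟩
      smul_mem' := by
        intro c y hy
        have h01 : ∀ c : ZMod 2, c = 0 ∨ c = 1 := by decide
        rcases h01 c with rfl | rfl
        · rw [zero_smul]
          exact ⟨C.zero_mem, by rw [hwt0]⟩
        · rw [one_smul]
          exact hy }
  have hC0le : C0 ≤ C := fun y hy => hy.1
  have hx0n : x0 ∉ C0 := by
    rintro ⟨-, h4⟩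
    rw [hx0w] at h4
    omega
  have haa : ∀ a : ZMod 2, a + a = 0 := by decide
  have hsup : C0 ⊔ Submodule.span (ZMod 2) {x0} = C := by
    apply le_antisymm
    · refine sup_le hC0le ?_
      rw [Submodule.span_singleton_le_iff_mem]
      exact hx0C
    · intro y hy
      obtain ⟨m2, hm2⟩ := heven y hy
      by_cases h4 : wt y % 4 = 0
      · exact Submodule.mem_sup_left ⟨hy, h4⟩
      · have hyx0 : y + x0 ∈ C0 := by
          refine ⟨C.add_mem hy hx0C, ?_⟩
          have h1 := wt_add_ov y x0
          obtain ⟨m, hm⟩ := hov y hy x0 hx0C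
          rw [hx0w] at h1
          omega
        have : y = (y + x0) + x0 := by
          funext i
          simp only [Pi.add_apply]
          rw [add_assoc, haa (x0 i), add_zero]
        rw [this]
        exact Submodule.add_mem _ (Submodule.mem_sup_left hyx0)
          (Submodule.mem_sup_right (Submodule.mem_span_singleton_self x0))
  have hinf : C0 ⊓ Submodule.span (ZMod 2) {x0} = ⊥ := by
    rw [Submodule.eq_bot_iff]
    rintro y ⟨hyC0, hyspan⟩
    obtain ⟨c, hc⟩ := Submodule.mem_span_singleton.mp hyspan
    have h01 : ∀ c : ZMod 2, c = 0 ∨ c = 1 := by decide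
    rcases h01 c with rfl | rfl
    · rw [← hc, zero_smul]
    · rw [← hc, one_smul] at hyC0
      exact absurd hyC0 hx0n
  have hrk0 : Module.finrank (ZMod 2) C0 = k - 1 := by
    have h1 := Submodule.finrank_sup_add_finrank_inf_eq C0 (Submodule.span (ZMod 2) {x0})
    rw [hsup, hinf, hrk, finrank_bot, finrank_span_singleton hx0ne] at h1
    omega
  have hmin0 : ∀ y ∈ C0, y ≠ 0 → d + 2 ≤ wt y := by
    rintro y ⟨hyC, hy4⟩ hyne
    have := hmd y hyC hyne
    omega
  have := griesmer_aux (k - 1) (d + 2) C0 (by omega) hrk0 hmin0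
  rw [Fintype.card_fin] at this
  omega

theorem stmt11 : ∀ n k d : ℕ,
    (n, k, d) ∈ ([(45, 6, 22), (53, 6, 26), (60, 6, 30), (47, 7, 22), (71, 7, 34),
      (79, 7, 38), (93, 7, 46), (102, 7, 50), (109, 7, 54), (117, 7, 58),
      (124, 7, 62)] : List (ℕ × ℕ × ℕ)) →
    ¬ ∃ C : Submodule (ZMod 2) (Fin n → ZMod 2),
      Module.finrank (ZMod 2) C = k ∧ SelfOrthogonal C ∧ HasMinDist C d := by
  intro n k d h
  simp only [List.mem_cons, List.not_mem_nil, or_false, Prod.mk.injEq] at h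
  rcases h with ⟨rfl,rfl,rfl⟩|⟨rfl,rfl,rfl⟩|⟨rfl,rfl,rfl⟩|⟨rfl,rfl,rfl⟩|⟨rfl,rfl,rfl⟩|
    ⟨rfl,rfl,rfl⟩|⟨rfl,rfl,rfl⟩|⟨rfl,rfl,rfl⟩|⟨rfl,rfl,rfl⟩|⟨rfl,rfl,rfl⟩|⟨rfl,rfl,rfl⟩ <;>
    exact no_SO (by norm_num) (by norm_num) (by decide)
end

section
/- There is no binary self-orthogonal [125,7,62] code and there is no binary self-orthogonal [62,7,30] code; that is, no 7-dimensional self-orthogonal subspace of F_2^125 has minimum distance 62, and no 7-dimensional self-orthogonal subspace of F_2^62 has minimum distance 30. -/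
open Finset

lemma wt_eq_sum {ι : Type*} [Fintype ι] (x : ι → ZMod 2) :
    wt x = ∑ i, if x i ≠ 0 then 1 else 0 := by
  classical
  simpa [wt] using (Finset.card_filter (fun i => x i ≠ 0) Finset.univ)

-- mod 4 additivity of weight for orthogonal vectors
lemma key_add {ι : Type*} [Fintype ι] (x y : ι → ZMod 2) (h : ∑ i, x i * y i = 0) :
    ∃ m, wt x + wt y = wt (x + y) + 4 * m := by
  classical
  set I : ℕ := ∑ i, if x i ≠ 0 ∧ y i ≠ 0 then 1 else 0 with hI
  have hpt : ∀ a b : ZMod 2,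
      ((if a ≠ 0 then 1 else 0) + (if b ≠ 0 then 1 else 0) : ℕ)
        = (if a + b ≠ 0 then 1 else 0) + 2 * (if a ≠ 0 ∧ b ≠ 0 then 1 else 0) := by
    decide
  have hsum : wt x + wt y = wt (x + y) + 2 * I := by
    rw [wt_eq_sum, wt_eq_sum, wt_eq_sum, ← Finset.sum_add_distrib, hI,
      Finset.mul_sum, ← Finset.sum_add_distrib]
    exact Finset.sum_congr rfl fun i _ => by simpa using hpt (x i) (y i)
  have hcast : ((I : ZMod 2)) = 0 := by
    have hab : ∀ a b : ZMod 2, ((if a ≠ 0 ∧ b ≠ 0 then 1 else 0 : ℕ) : ZMod 2) = a * b := by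
      decide
    have : ((I : ZMod 2)) = ∑ i, x i * y i := by
      rw [hI]
      push_cast
      exact Finset.sum_congr rfl fun i _ => by simpa using hab (x i) (y i)
    rw [this, h]
  obtain ⟨m, hm⟩ := (ZMod.natCast_eq_zero_iff I 2).mp hcast
  exact ⟨m, by omega⟩

-- first moment bound for a sum-closed finite set of vectors
lemma sum_wt_le {ι : Type*} [Fintype ι] (S : Finset (ι → ZMod 2))
    (hadd : ∀ x ∈ S, ∀ y ∈ S, x + y ∈ S) :
    2 * ∑ x ∈ S, wt x ≤ Fintype.card ι * S.card := by
  classical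
  have hswap : ∑ x ∈ S, wt x
      = ∑ i : ι, (S.filter (fun x => x i ≠ 0)).card := by
    simp only [wt_eq_sum, Finset.card_filter]
    exact Finset.sum_comm
  have hbound : ∀ i : ι, 2 * (S.filter (fun x => x i ≠ 0)).card ≤ S.card := by
    intro i
    have hpart := Finset.card_filter_add_card_filter_not
      (s := S) (p := fun x => x i ≠ 0)
    simp only [not_not] at hpart
    by_cases hne : (S.filter (fun x => x i ≠ 0)).Nonempty
    · obtain ⟨x0, hx0⟩ := hne
      rw [Finset.mem_filter] at hx0
      have hinj : (S.filter (fun x => x i ≠ 0)).card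
          ≤ (S.filter (fun x => x i = 0)).card := by
        apply Finset.card_le_card_of_injOn (fun x => x + x0)
        · intro x hx
          simp only [Finset.mem_coe, Finset.mem_filter] at hx ⊢
          refine ⟨hadd x hx.1 x0 hx0.1, ?_⟩
          have h1 : x i = 1 := by
            have hx2 := hx.2; revert hx2; generalize x i = a; revert a; decide
          have h2 : x0 i = 1 := by
            have hx2 := hx0.2; revert hx2; generalize x0 i = a; revert a; decide
          show (x + x0) i = 0
          rw [Pi.add_apply, h1, h2]
          decide
        · intro a _ b _ hab
          simpa using congrArg (fun z => z + x0) hab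
      calc 2 * (S.filter (fun x => x i ≠ 0)).card
          = (S.filter (fun x => x i ≠ 0)).card + (S.filter (fun x => x i ≠ 0)).card :=
            two_mul _
        _ ≤ (S.filter (fun x => x i ≠ 0)).card + (S.filter (fun x => x i = 0)).card :=
            Nat.add_le_add_left hinj _
        _ = S.card := hpart
    · rw [Finset.not_nonempty_iff_eq_empty] at hne
      rw [hne]
      simp
  calc 2 * ∑ x ∈ S, wt x = ∑ i : ι, 2 * (S.filter (fun x => x i ≠ 0)).card := by
        rw [hswap, Finset.mul_sum]
    _ ≤ ∑ _i : ι, S.card := Finset.sum_le_sum fun i _ => hbound i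
    _ = Fintype.card ι * S.card := by rw [Finset.sum_const, Finset.card_univ, smul_eq_mul]

lemma no_SO_code {ι : Type*} [Fintype ι] {d : ℕ}
    (C : Submodule (ZMod 2) (ι → ZMod 2))
    (hrank : Module.finrank (ZMod 2) C = 7)
    (hSO : SelfOrthogonal C) (hmd : HasMinDist C d)
    (hd4 : d % 4 = 2) (hnum : Fintype.card ι * 32 < 63 * (d + 2)) : False := by
  classical
  let SC : Finset (ι → ZMod 2) := Finset.univ.filter (fun x => x ∈ C)
  have hmemSC : ∀ x : ι → ZMod 2, x ∈ SC ↔ x ∈ C := by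
    intro x; simp [SC]
  have hcardC : SC.card = 128 := by
    have h := Module.card_eq_pow_finrank (K := ZMod 2) (V := C)
    rw [hrank, ZMod.card] at h
    have h2 : Fintype.card C = SC.card := by
      rw [Fintype.card_subtype]
    rw [← h2, h]
    norm_num
  let SK : Finset (ι → ZMod 2) := SC.filter (fun x => wt x % 4 = 0)
  have hmemSK : ∀ x : ι → ZMod 2, x ∈ SK ↔ x ∈ SC ∧ wt x % 4 = 0 := by
    intro x; exact Finset.mem_filter
  obtain ⟨⟨x0, hx0C, hx0ne, hx0wt⟩, hlow⟩ := hmd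
  have hx0SC : x0 ∈ SC := (hmemSC x0).mpr hx0C
  -- wt mod 4 is "additive" on C
  have hadd4 : ∀ x ∈ SC, ∀ y ∈ SC, (wt x + wt y) % 4 = wt (x + y) % 4 := by
    intro x hx y hy
    obtain ⟨m, hm⟩ := key_add x y (hSO x ((hmemSC x).mp hx) y ((hmemSC y).mp hy))
    omega
  have haddC : ∀ x ∈ SC, ∀ y ∈ SC, x + y ∈ SC := fun x hx y hy =>
    (hmemSC _).mpr (C.add_mem ((hmemSC x).mp hx) ((hmemSC y).mp hy))
  have haddK : ∀ x ∈ SK, ∀ y ∈ SK, x + y ∈ SK := by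
    intro x hx y hy
    rw [hmemSK] at hx hy ⊢
    refine ⟨haddC x hx.1 y hy.1, ?_⟩
    have := hadd4 x hx.1 y hy.1
    omega
  -- every codeword has even weight
  have heven : ∀ x ∈ SC, wt x % 2 = 0 := by
    intro x hx
    obtain ⟨m, hm⟩ := key_add x x (hSO x ((hmemSC x).mp hx) x ((hmemSC x).mp hx))
    have hxx : x + x = 0 := by
      ext i
      show x i + x i = 0
      generalize x i = a; revert a; decide
    rw [hxx] at hm
    have h0 : wt (0 : ι → ZMod 2) = 0 := by simp [wt]
    omega
  have hx0nK : x0 ∉ SK := by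
    rw [hmemSK]
    rintro ⟨-, h⟩
    omega
  have hKsub : SK ⊆ SC := Finset.filter_subset _ _
  have hswap4 : ∀ x ∈ SC, (x ∈ SK ↔ (x + x0) ∉ SK) := by
    intro x hx
    have hxx0 : x + x0 ∈ SC := haddC x hx x0 hx0SC
    have h4 := hadd4 x hx x0 hx0SC
    have hevx := heven x hx
    rw [hmemSK, hmemSK]
    constructor
    · rintro ⟨-, h⟩ ⟨-, h2⟩
      omega
    · intro h
      refine ⟨hx, ?_⟩
      by_contra hne
      exact h ⟨hxx0, by omega⟩
  have hcard1 : SK.card ≤ (SC \ SK).card := by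
    apply Finset.card_le_card_of_injOn (fun x => x + x0)
    · intro x hx
      rw [Finset.mem_coe, Finset.mem_sdiff]
      exact ⟨haddC x (hKsub hx) x0 hx0SC, (hswap4 x (hKsub hx)).mp hx⟩
    · intro a _ b _ hab
      simpa using congrArg (fun z => z + x0) hab
  have hcard2 : (SC \ SK).card ≤ SK.card := by
    apply Finset.card_le_card_of_injOn (fun x => x + x0)
    · intro x hx
      rw [Finset.mem_coe, Finset.mem_sdiff] at hx
      by_contra hne
      exact hx.2 ((hswap4 x hx.1).mpr (by simpa using hne))
    · intro a _ b _ hab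
      simpa using congrArg (fun z => z + x0) hab
  have hsdiff : (SC \ SK).card = SC.card - SK.card := Finset.card_sdiff_of_subset hKsub
  have hKle : SK.card ≤ SC.card := Finset.card_le_card hKsub
  have hcardK : SK.card = 64 := by omega
  -- nonzero words of SK have weight ≥ d + 2
  have hwtK : ∀ x ∈ SK, x ≠ 0 → d + 2 ≤ wt x := by
    intro x hx hne
    rw [hmemSK] at hx
    have := hlow x ((hmemSC x).mp hx.1) hne
    have h4 := hx.2
    omega
  have h0K : (0 : ι → ZMod 2) ∈ SK := by
    rw [hmemSK]
    exact ⟨(hmemSC 0).mpr C.zero_mem, by simp [wt]⟩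
  have hlb : 63 * (d + 2) ≤ ∑ x ∈ SK, wt x := by
    calc 63 * (d + 2) = ∑ _x ∈ SK.erase 0, (d + 2) := by
          rw [Finset.sum_const, Finset.card_erase_of_mem h0K, hcardK, smul_eq_mul]
      _ ≤ ∑ x ∈ SK.erase 0, wt x :=
          Finset.sum_le_sum fun x hx => hwtK x (Finset.mem_of_mem_erase hx)
            (Finset.ne_of_mem_erase hx)
      _ ≤ ∑ x ∈ SK, wt x := Finset.sum_le_sum_of_subset (Finset.erase_subset _ _)
  have hub := sum_wt_le SK haddK
  rw [hcardK] at hub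
  omega

theorem stmt12 :
    (¬ ∃ C : Submodule (ZMod 2) (Fin 125 → ZMod 2),
      Module.finrank (ZMod 2) C = 7 ∧ SelfOrthogonal C ∧ HasMinDist C 62) ∧
    (¬ ∃ C : Submodule (ZMod 2) (Fin 62 → ZMod 2),
      Module.finrank (ZMod 2) C = 7 ∧ SelfOrthogonal C ∧ HasMinDist C 30) := by
  constructor
  · rintro ⟨C, hr, hso, hmd⟩
    exact no_SO_code C hr hso hmd (by norm_num) (by simp)
  · rintro ⟨C, hr, hso, hmd⟩
    exact no_SO_code C hr hso hmd (by norm_num) (by simp)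
end
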